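/- arXiv:1908.06823 — 4 statements merged into one kernel-verified Lean document; each statement's English description precedes it below -/
import Mathlib

section
/- Let 1 → R → F →π→ G → 1 be a periodic presentation of a finite group G and for each k ≥ 1 set E_k = F/[R,_kF] (each E_k is finite). Then for every k ≥ 1: [R,_kF] ⊆ [F,F]; the kernel [R,_kF]/[R,_{k+1}F] of the canonical surjection E_{k+1} → E_k is central in E_{k+1}, is contained in the commutator subgroup [E_{k+1},E_{k+1}], and is isomorphic to H₂(E_k;ℤ); and for each free generator f_i its images in E_{k+1} and in E_k both have order exactly m_i. In other words, E_{k+1} is a locally unitary Schur cover of E_k. -/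
/-- The free product `⟨f₁⟩ ∗ ⋯ ∗ ⟨f_d⟩` of cyclic groups, the `i`-th factor being cyclic of
order `m i` (with `m i = 0` corresponding to an infinite cyclic factor, since `ZMod 0 = ℤ`). -/
abbrev FreeProdCyclic {ι : Type*} (m : ι → ℕ) : Type _ :=
  Monoid.CoprodI (fun i : ι => Multiplicative (ZMod (m i)))

/-- The distinguished generator `fᵢ` of the `i`-th cyclic free factor. -/
def cyclicGen {ι : Type*} (m : ι → ℕ) (i : ι) : FreeProdCyclic m :=
  Monoid.CoprodI.of (Multiplicative.ofAdd (1 : ZMod (m i)))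

/-- The quotient `([F,F] ⊓ R) / [R,F]` appearing in the Hopf formula. -/
abbrev hopfQuotient {F : Type*} [Group F] (R : Subgroup F) : Type _ :=
  ↥(⁅(⊤ : Subgroup F), (⊤ : Subgroup F)⁆ ⊓ R) ⧸
    ((⁅R, (⊤ : Subgroup F)⁆).subgroupOf (⁅(⊤ : Subgroup F), (⊤ : Subgroup F)⁆ ⊓ R))

instance hopfQuotient_normal {F : Type*} [Group F] (R : Subgroup F) [R.Normal] :
    ((⁅R, (⊤ : Subgroup F)⁆).subgroupOf
      (⁅(⊤ : Subgroup F), (⊤ : Subgroup F)⁆ ⊓ R)).Normal :=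
  Subgroup.Normal.subgroupOf inferInstance _

/-- The second integral homology `H₂(G;ℤ)` of a group `G`, realized via the Hopf formula
`H₂(G;ℤ) ≅ ([F,F] ⊓ R)/[R,F]` applied to the canonical presentation `1 → R → F → G → 1`
of `G` by the free group `F` on the underlying set of `G` (with projection `F → G`
induced by the identity map, whose kernel is `R`). -/
abbrev H2Z (G : Type*) [Group G] : Type _ :=
  hopfQuotient (MonoidHom.ker (FreeGroup.lift (id : G → G)))

/-- Iterated commutator subgroups: `[R,₀F] = R` and `[R,_{k+1}F] = [[R,_kF],F]`. -/
def iterComm {F : Type*} [Group F] (R : Subgroup F) : ℕ → Subgroup F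
  | 0 => R
  | k + 1 => ⁅iterComm R k, (⊤ : Subgroup F)⁆

instance iterComm_normal {F : Type*} [Group F] (R : Subgroup F) [hR : R.Normal] (k : ℕ) :
    (iterComm R k).Normal := by
  induction k with
  | zero => exact hR
  | succ k ih => exact @Subgroup.commutator_normal _ _ _ _ ih _

/-- The transition homomorphism `F/[R,_{k+1}F] →* F/[R,_kF]`. -/
def iterCommTrans {F : Type*} [Group F] (R : Subgroup F) [R.Normal] (k : ℕ) :
    F ⧸ iterComm R (k + 1) →* F ⧸ iterComm R k :=
  QuotientGroup.map _ _ (MonoidHom.id F)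
    (by simpa [iterComm] using Subgroup.commutator_le_left (iterComm R k) (⊤ : Subgroup F))

/-!
STATEMENT 13: Let `1 → R → F →π→ G → 1` be a periodic presentation of a finite group `G`
and for each `k ≥ 1` set `E_k = F/[R,_kF]` (each `E_k` is finite).  Then for every
`k ≥ 1`: `[R,_kF] ⊆ [F,F]`; the kernel `[R,_kF]/[R,_{k+1}F]` of the canonical surjection
`E_{k+1} → E_k` is central in `E_{k+1}`, is contained in the commutator subgroup
`[E_{k+1},E_{k+1}]`, and is isomorphic to `H₂(E_k;ℤ)`; and for each free generator `fᵢ`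
its images in `E_{k+1}` and in `E_k` both have order exactly `mᵢ`.  In other words,
`E_{k+1}` is a locally unitary Schur cover of `E_k`.
-/
namespace SchurAux


open Multiplicative Subgroup
open scoped commutatorElement

lemma ofAdd_one_pow (n : ℕ) : (ofAdd (1 : ZMod n)) ^ n = 1 := by
  have h : ((ofAdd (1 : ZMod n)) ^ n).toAdd = ((1 : Multiplicative (ZMod n))).toAdd := by
    rw [toAdd_pow, toAdd_ofAdd, toAdd_one, nsmul_eq_mul, mul_one, ZMod.natCast_self]
  exact Multiplicative.toAdd.injective h

def zmodHom {G : Type*} [Group G] {n : ℕ} (hn : n ≠ 0) (g : G) (hg : g ^ n = 1) :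
    Multiplicative (ZMod n) →* G :=
  MonoidHom.mk' (fun x => g ^ (Multiplicative.toAdd x).val) (by
    intro a b
    haveI : NeZero n := ⟨hn⟩
    have hd : orderOf g ∣ n := orderOf_dvd_of_pow_eq_one hg
    show g ^ (Multiplicative.toAdd (a * b)).val = _
    rw [toAdd_mul, ZMod.val_add, ← pow_add]
    exact pow_eq_pow_iff_modEq.mpr ((Nat.mod_modEq _ n).of_dvd hd))

lemma zmodHom_ofAdd_one {G : Type*} [Group G] {n : ℕ} (hn : n ≠ 0) (g : G) (hg : g ^ n = 1) :
    zmodHom hn g hg (ofAdd 1) = g := by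
  show g ^ (Multiplicative.toAdd (ofAdd (1 : ZMod n))).val = g
  rw [toAdd_ofAdd]
  rcases eq_or_ne n 1 with rfl | h1
  · have hg1 : g = 1 := by simpa using hg
    simp [hg1]
  · rw [ZMod.val_one'' h1, pow_one]

lemma mk_commutator_central {F : Type*} [Group F] (R : Subgroup F) [R.Normal] {r : F}
    (hr : r ∈ R) :
    (QuotientGroup.mk r : F ⧸ ⁅R, (⊤ : Subgroup F)⁆) ∈
      Subgroup.center (F ⧸ ⁅R, (⊤ : Subgroup F)⁆) := by
  rw [Subgroup.mem_center_iff]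
  intro z
  induction z using QuotientGroup.induction_on with
  | H f =>
    have : ((f * r : F) : F ⧸ ⁅R, (⊤ : Subgroup F)⁆) = ((r * f : F) : F ⧸ ⁅R, (⊤ : Subgroup F)⁆) := by
      rw [QuotientGroup.eq]
      have h := Subgroup.commutator_mem_commutator (Subgroup.inv_mem _ hr)
        (Subgroup.mem_top f⁻¹)
      convert h using 1
      simp [commutatorElement_def, mul_assoc]
    simpa [QuotientGroup.mk_mul] using this

lemma lift_diff_mem_commutator {F₁ F₂ : Type*} [Group F₁] [Group F₂] (S : Subgroup F₂) [S.Normal]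
    (θ θ' : F₁ →* F₂) (h : ∀ x, θ x * (θ' x)⁻¹ ∈ S) {x : F₁}
    (hx : x ∈ ⁅(⊤ : Subgroup F₁), (⊤ : Subgroup F₁)⁆) :
    θ x * (θ' x)⁻¹ ∈ ⁅S, (⊤ : Subgroup F₂)⁆ := by
  set K : Subgroup F₂ := ⁅S, (⊤ : Subgroup F₂)⁆ with hK
  let μ : F₂ →* F₂ ⧸ K := QuotientGroup.mk' K
  have hc : ∀ y : F₁, μ (θ y) * (μ (θ' y))⁻¹ ∈ Subgroup.center (F₂ ⧸ K) := by
    intro y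
    have h2 : μ (θ y * (θ' y)⁻¹) ∈ Subgroup.center (F₂ ⧸ K) := mk_commutator_central S (h y)
    simpa using h2
  let δ : F₁ →* F₂ ⧸ K := MonoidHom.mk' (fun y => μ (θ y) * (μ (θ' y))⁻¹) (by
    intro a b
    have hcb := Subgroup.mem_center_iff.mp (hc b)
    show μ (θ (a * b)) * (μ (θ' (a * b)))⁻¹ =
      (μ (θ a) * (μ (θ' a))⁻¹) * (μ (θ b) * (μ (θ' b))⁻¹)
    rw [map_mul, map_mul, map_mul, map_mul, mul_inv_rev (μ (θ' a)) (μ (θ' b))]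
    rw [show μ (θ a) * μ (θ b) * ((μ (θ' b))⁻¹ * (μ (θ' a))⁻¹)
        = μ (θ a) * (μ (θ b) * (μ (θ' b))⁻¹) * (μ (θ' a))⁻¹ by group]
    rw [hcb (μ (θ a))]
    rw [mul_assoc (μ (θ b) * (μ (θ' b))⁻¹)]
    exact (hcb _).symm)
  have hker : ⁅(⊤ : Subgroup F₁), (⊤ : Subgroup F₁)⁆ ≤ δ.ker := by
    rw [Subgroup.commutator_le]
    intro g₁ _ g₂ _
    rw [MonoidHom.mem_ker, map_commutatorElement]
    exact commutatorElement_eq_one_iff_commute.mpr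
      ((Subgroup.mem_center_iff.mp (hc g₁) (δ g₂)).symm)
  have h1 : δ x = 1 := hker hx
  have h2 : μ (θ x * (θ' x)⁻¹) = 1 := by rw [map_mul, map_inv]; exact h1
  have h3 : θ x * (θ' x)⁻¹ ∈ μ.ker := MonoidHom.mem_ker.mpr h2
  rwa [QuotientGroup.ker_mk'] at h3



open Subgroup

lemma mem_comm_map {F₁ F₂ : Type*} [Group F₁] [Group F₂] (φ : F₁ →* F₂) {x : F₁}
    (hx : x ∈ ⁅(⊤ : Subgroup F₁), (⊤ : Subgroup F₁)⁆) :
    φ x ∈ ⁅(⊤ : Subgroup F₂), (⊤ : Subgroup F₂)⁆ := by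
  have h := Subgroup.mem_map_of_mem φ hx
  rw [Subgroup.map_commutator] at h
  exact Subgroup.commutator_mono le_top le_top h

def hopfMap {F₁ F₂ : Type*} [Group F₁] [Group F₂] (S₁ : Subgroup F₁) (S₂ : Subgroup F₂)
    [S₁.Normal] [S₂.Normal] (φ : F₁ →* F₂) (h : ∀ x ∈ S₁, φ x ∈ S₂) :
    hopfQuotient S₁ →* hopfQuotient S₂ :=
  QuotientGroup.map _ _
    ((φ.domRestrict (⁅(⊤ : Subgroup F₁), (⊤ : Subgroup F₁)⁆ ⊓ S₁)).codRestrict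
      (⁅(⊤ : Subgroup F₂), (⊤ : Subgroup F₂)⁆ ⊓ S₂)
      (fun x => Subgroup.mem_inf.mpr
        ⟨mem_comm_map φ (Subgroup.mem_inf.mp x.2).1, h x (Subgroup.mem_inf.mp x.2).2⟩))
    (by
      intro y hy
      rw [Subgroup.mem_subgroupOf] at hy
      rw [Subgroup.mem_comap, Subgroup.mem_subgroupOf]
      show φ (↑y) ∈ ⁅S₂, (⊤ : Subgroup F₂)⁆
      have hmap := Subgroup.mem_map_of_mem φ hy
      rw [Subgroup.map_commutator] at hmap
      refine Subgroup.commutator_mono ?_ le_top hmap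
      exact Subgroup.map_le_iff_le_comap.mpr (fun z hz => h z hz))

lemma hopfMap_comp {F₁ F₂ F₃ : Type*} [Group F₁] [Group F₂] [Group F₃]
    (S₁ : Subgroup F₁) (S₂ : Subgroup F₂) (S₃ : Subgroup F₃)
    [S₁.Normal] [S₂.Normal] [S₃.Normal]
    (φ : F₁ →* F₂) (ψ : F₂ →* F₃) (h₁ : ∀ x ∈ S₁, φ x ∈ S₂) (h₂ : ∀ x ∈ S₂, ψ x ∈ S₃) :
    (hopfMap S₂ S₃ ψ h₂).comp (hopfMap S₁ S₂ φ h₁) =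
      hopfMap S₁ S₃ (ψ.comp φ) (fun x hx => h₂ _ (h₁ x hx)) := by
  apply MonoidHom.ext
  intro x
  induction x using QuotientGroup.induction_on with
  | H z => rfl

lemma hopfMap_id {F : Type*} [Group F] (S : Subgroup F) [S.Normal] :
    hopfMap S S (MonoidHom.id F) (fun _ hx => hx) = MonoidHom.id _ := by
  apply MonoidHom.ext
  intro x
  induction x using QuotientGroup.induction_on with
  | H z => rfl

lemma hopfMap_congr {F₁ F₂ : Type*} [Group F₁] [Group F₂] (S₁ : Subgroup F₁) (S₂ : Subgroup F₂)
    [S₁.Normal] [S₂.Normal] (θ θ' : F₁ →* F₂) (h : ∀ x ∈ S₁, θ x ∈ S₂) (h' : ∀ x ∈ S₁, θ' x ∈ S₂)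
    (hdiff : ∀ x, θ x * (θ' x)⁻¹ ∈ S₂) :
    hopfMap S₁ S₂ θ h = hopfMap S₁ S₂ θ' h' := by
  apply MonoidHom.ext
  intro x
  induction x using QuotientGroup.induction_on with
  | H z =>
    have hz := (Subgroup.mem_inf.mp z.2).1
    have key : θ ↑z * (θ' ↑z)⁻¹ ∈ ⁅S₂, (⊤ : Subgroup F₂)⁆ :=
      lift_diff_mem_commutator S₂ θ θ' hdiff hz
    show QuotientGroup.mk _ = QuotientGroup.mk _
    rw [QuotientGroup.eq]
    rw [Subgroup.mem_subgroupOf]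
    show (θ ↑z)⁻¹ * (θ' ↑z) ∈ ⁅S₂, (⊤ : Subgroup F₂)⁆
    have hconj := (inferInstance : (⁅S₂, (⊤ : Subgroup F₂)⁆).Normal).conj_mem _
      (Subgroup.inv_mem _ key) (θ ↑z)⁻¹
    convert hconj using 1
    group

lemma hopf_indep {X Y E : Type*} [Group E] (p₁ : FreeGroup X →* E) (p₂ : FreeGroup Y →* E)
    (h₁ : Function.Surjective p₁) (h₂ : Function.Surjective p₂) :
    Nonempty (hopfQuotient p₁.ker ≃* hopfQuotient p₂.ker) := by
  choose σ hσ using h₂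
  choose τ hτ using h₁
  let φ : FreeGroup X →* FreeGroup Y := FreeGroup.lift fun x => σ (p₁ (FreeGroup.of x))
  let ψ : FreeGroup Y →* FreeGroup X := FreeGroup.lift fun y => τ (p₂ (FreeGroup.of y))
  have hφ : ∀ x, p₂ (φ x) = p₁ x := by
    intro x
    have : p₂.comp φ = p₁ :=
      FreeGroup.ext_hom _ _ (fun a => by simp [φ, FreeGroup.lift_apply_of, hσ])
    exact DFunLike.congr_fun this x
  have hψ : ∀ y, p₁ (ψ y) = p₂ y := by
    intro y
    have : p₁.comp ψ = p₂ :=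
      FreeGroup.ext_hom _ _ (fun a => by simp [ψ, FreeGroup.lift_apply_of, hτ])
    exact DFunLike.congr_fun this y
  have hφk : ∀ x ∈ p₁.ker, φ x ∈ p₂.ker := fun x hx => by
    rw [MonoidHom.mem_ker, hφ]; exact hx
  have hψk : ∀ y ∈ p₂.ker, ψ y ∈ p₁.ker := fun y hy => by
    rw [MonoidHom.mem_ker, hψ]; exact hy
  refine ⟨MonoidHom.toMulEquiv (hopfMap p₁.ker p₂.ker φ hφk) (hopfMap p₂.ker p₁.ker ψ hψk) ?_ ?_⟩
  · rw [hopfMap_comp]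
    rw [hopfMap_congr p₁.ker p₁.ker (ψ.comp φ) (MonoidHom.id _) _ (fun _ hx => hx)
      (fun x => by rw [MonoidHom.mem_ker]; simp [hψ, hφ])]
    exact hopfMap_id p₁.ker
  · rw [hopfMap_comp]
    rw [hopfMap_congr p₂.ker p₂.ker (φ.comp ψ) (MonoidHom.id _) _ (fun _ hx => hx)
      (fun y => by rw [MonoidHom.mem_ker]; simp [hφ, hψ])]
    exact hopfMap_id p₂.ker

lemma hopf_subsingleton_iff {F : Type*} [Group F] (S : Subgroup F) [S.Normal] :
    Subsingleton (hopfQuotient S) ↔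
      ∀ x ∈ ⁅(⊤ : Subgroup F), (⊤ : Subgroup F)⁆, x ∈ S → x ∈ ⁅S, (⊤ : Subgroup F)⁆ := by
  constructor
  · intro hsub x hx hxS
    have h1 : (QuotientGroup.mk (⟨x, Subgroup.mem_inf.mpr ⟨hx, hxS⟩⟩ :
        ↥(⁅(⊤ : Subgroup F), (⊤ : Subgroup F)⁆ ⊓ S)) : hopfQuotient S) = 1 :=
      Subsingleton.elim _ _
    have h2 := (QuotientGroup.eq_one_iff _).mp h1
    rwa [Subgroup.mem_subgroupOf] at h2
  · intro hyp
    constructor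
    intro a b
    induction a using QuotientGroup.induction_on with
    | H z =>
      induction b using QuotientGroup.induction_on with
      | H w =>
        have hz : (QuotientGroup.mk z : hopfQuotient S) = 1 := by
          rw [QuotientGroup.eq_one_iff]
          rw [Subgroup.mem_subgroupOf]
          exact hyp _ (Subgroup.mem_inf.mp z.2).1 (Subgroup.mem_inf.mp z.2).2
        have hw : (QuotientGroup.mk w : hopfQuotient S) = 1 := by
          rw [QuotientGroup.eq_one_iff]
          rw [Subgroup.mem_subgroupOf]
          exact hyp _ (Subgroup.mem_inf.mp w.2).1 (Subgroup.mem_inf.mp w.2).2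
        rw [hz, hw]



open Multiplicative Subgroup

variable {d : ℕ} {m : Fin d → ℕ}

lemma cyclicGen_pow (m : Fin d → ℕ) (i : Fin d) : cyclicGen m i ^ (m i) = 1 := by
  rw [cyclicGen, ← map_pow, ofAdd_one_pow, map_one]

lemma closure_range_cyclicGen (hm : ∀ i, m i ≠ 0) :
    Subgroup.closure (Set.range (cyclicGen m)) = ⊤ := by
  rw [eq_top_iff]
  intro g hg
  clear hg
  induction g using Monoid.CoprodI.induction_on with
  | one => exact one_mem _
  | of i x =>
    haveI : NeZero (m i) := ⟨hm i⟩
    have hx : x = (ofAdd (1 : ZMod (m i))) ^ (Multiplicative.toAdd x).val := by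
      apply Multiplicative.toAdd.injective
      rw [toAdd_pow, toAdd_ofAdd, nsmul_eq_mul, mul_one]
      exact (ZMod.natCast_rightInverse (Multiplicative.toAdd x)).symm
    rw [hx, map_pow]
    exact pow_mem (Subgroup.subset_closure (Set.mem_range_self i)) _
  | mul x y hx hy => exact mul_mem hx hy

/-- The standard presentation map `FreeGroup (Fin d) → FreeProdCyclic m`. -/
def pFC (m : Fin d → ℕ) : FreeGroup (Fin d) →* FreeProdCyclic m := FreeGroup.lift (cyclicGen m)

lemma pFC_surjective (hm : ∀ i, m i ≠ 0) : Function.Surjective (pFC m) := by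
  rw [← MonoidHom.range_eq_top, eq_top_iff, ← closure_range_cyclicGen hm, Subgroup.closure_le]
  rintro _ ⟨i, rfl⟩
  exact MonoidHom.mem_range.mpr ⟨FreeGroup.of i, FreeGroup.lift_apply_of⟩

lemma ker_pFC (hm : ∀ i, m i ≠ 0) :
    (pFC m).ker = Subgroup.normalClosure (Set.range fun i => FreeGroup.of i ^ (m i)) := by
  set N := Subgroup.normalClosure (Set.range fun i : Fin d => FreeGroup.of i ^ (m i)) with hN
  apply le_antisymm
  · have hpow : ∀ i, ((QuotientGroup.mk' N) (FreeGroup.of i)) ^ (m i) = 1 := by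
      intro i
      rw [← map_pow]
      exact MonoidHom.mem_ker.mp
        (by rw [QuotientGroup.ker_mk']; exact Subgroup.subset_normalClosure ⟨i, rfl⟩)
    let ρ : FreeProdCyclic m →* FreeGroup (Fin d) ⧸ N :=
      Monoid.CoprodI.lift (fun i => zmodHom (hm i) ((QuotientGroup.mk' N) (FreeGroup.of i))
        (hpow i))
    have hρ : ρ.comp (pFC m) = QuotientGroup.mk' N := by
      apply FreeGroup.ext_hom
      intro i
      show ρ ((pFC m) (FreeGroup.of i)) = _
      rw [show (pFC m) (FreeGroup.of i) = cyclicGen m i from FreeGroup.lift_apply_of]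
      rw [cyclicGen, Monoid.CoprodI.lift_of, zmodHom_ofAdd_one]
    intro x hx
    have h1 : ρ ((pFC m) x) = (QuotientGroup.mk' N) x := DFunLike.congr_fun hρ x
    rw [MonoidHom.mem_ker.mp hx, map_one] at h1
    have h2 : x ∈ (QuotientGroup.mk' N).ker := MonoidHom.mem_ker.mpr h1.symm
    rwa [QuotientGroup.ker_mk'] at h2
  · apply Subgroup.normalClosure_le_normal
    rintro _ ⟨i, rfl⟩
    show FreeGroup.of i ^ m i ∈ (pFC m).ker
    rw [MonoidHom.mem_ker, map_pow,
      show (pFC m) (FreeGroup.of i) = cyclicGen m i from FreeGroup.lift_apply_of]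
    exact cyclicGen_pow m i

lemma hopf_trivial_relN (hm : ∀ i, m i ≠ 0) :
    ∀ x ∈ ⁅(⊤ : Subgroup (FreeGroup (Fin d))), (⊤ : Subgroup (FreeGroup (Fin d)))⁆,
      x ∈ Subgroup.normalClosure (Set.range fun i => FreeGroup.of i ^ (m i)) →
      x ∈ ⁅Subgroup.normalClosure (Set.range fun i : Fin d => FreeGroup.of i ^ (m i)),
           (⊤ : Subgroup (FreeGroup (Fin d)))⁆ := by
  classical
  set r : Fin d → FreeGroup (Fin d) := fun i => FreeGroup.of i ^ (m i) with hr
  set N : Subgroup (FreeGroup (Fin d)) := Subgroup.normalClosure (Set.range r) with hNdef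
  set K : Subgroup (FreeGroup (Fin d)) := ⁅N, (⊤ : Subgroup (FreeGroup (Fin d)))⁆ with hKdef
  haveI hKnorm : K.Normal := Subgroup.commutator_normal N ⊤
  intro x hxc hxN
  have hKN : K ≤ N := Subgroup.commutator_le_left N ⊤
  have hsupN : K ⊔ Subgroup.closure (Set.range r) ≤ N :=
    sup_le hKN ((Subgroup.closure_le _).mpr (fun y hy => Subgroup.subset_normalClosure hy))
  have hNM : N = K ⊔ Subgroup.closure (Set.range r) := by
    apply le_antisymm
    · haveI hMnorm : (K ⊔ Subgroup.closure (Set.range r)).Normal := by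
        constructor
        intro a ha g
        have h1 : ⁅g, a⁆ ∈ K := by
          rw [hKdef, Subgroup.commutator_comm]
          exact Subgroup.commutator_mem_commutator (Subgroup.mem_top g) (hsupN ha)
        have h2 : g * a * g⁻¹ = ⁅g, a⁆ * a := by group
        rw [h2]
        exact mul_mem (Subgroup.mem_sup_left h1) ha
      exact Subgroup.normalClosure_le_normal
        (fun y hy => Subgroup.mem_sup_right (Subgroup.subset_closure hy))
    · exact hsupN
  let μ : FreeGroup (Fin d) →* FreeGroup (Fin d) ⧸ K := QuotientGroup.mk' K
  have hcommN : ∀ a ∈ N, ∀ b ∈ N, Commute (μ a) (μ b) := by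
    intro a ha b hb
    have hab : ⁅a, b⁆ ∈ K := Subgroup.commutator_mem_commutator ha (Subgroup.mem_top b)
    have h1 : μ ⁅a, b⁆ = 1 := MonoidHom.mem_ker.mp (by rwa [QuotientGroup.ker_mk'])
    rw [← commutatorElement_eq_one_iff_commute, ← map_commutatorElement]
    exact h1
  have hrN : ∀ i, r i ∈ N := fun i => Subgroup.subset_normalClosure ⟨i, rfl⟩
  have hpair : Pairwise fun i j : Fin d => ∀ (u v : Multiplicative ℤ),
      Commute ((zpowersHom _ (μ (r i))) u) ((zpowersHom _ (μ (r j))) v) := by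
    intro i j _
    intro u v
    have hbase : Commute (μ (r i)) (μ (r j)) := hcommN _ (hrN i) _ (hrN j)
    simpa [zpowersHom_apply] using hbase.zpow_zpow u.toAdd v.toAdd
  let cop := MonoidHom.noncommPiCoprod (fun i => zpowersHom _ (μ (r i))) hpair
  let e := MulEquiv.piMultiplicative (fun _ : Fin d => ℤ)
  let β : Multiplicative (Fin d → ℤ) →* FreeGroup (Fin d) ⧸ K := cop.comp e.toMonoidHom
  have hβsingle : ∀ i, β (ofAdd (Pi.single i (1 : ℤ))) = μ (r i) := by
    intro i
    show cop (e (ofAdd (Pi.single i 1))) = μ (r i)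
    have he : e (ofAdd (Pi.single i (1 : ℤ))) = Pi.mulSingle i (ofAdd (1 : ℤ)) := by
      funext j
      simp only [MulEquiv.piMultiplicative_apply, toAdd_ofAdd, e]
      rcases eq_or_ne j i with rfl | hji
      · simp
      · simp [Pi.single_apply, Pi.mulSingle_apply, hji]
    rw [he, MonoidHom.noncommPiCoprod_mulSingle]
    simp [zpowersHom_apply]
  have himage : N.map μ ≤ β.range := by
    rw [hNM, Subgroup.map_sup]
    have h1 : K.map μ = ⊥ := (Subgroup.map_eq_bot_iff _).mpr (by rw [QuotientGroup.ker_mk'])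
    rw [h1, bot_sup_eq, MonoidHom.map_closure, Subgroup.closure_le]
    rintro _ ⟨_, ⟨i, rfl⟩, rfl⟩
    exact MonoidHom.mem_range.mpr ⟨ofAdd (Pi.single i 1), hβsingle i⟩
  let α₀ : FreeGroup (Fin d) →* Multiplicative (Fin d → ℤ) :=
    FreeGroup.lift (fun i => ofAdd (Pi.single i (1 : ℤ)))
  have hα₀comm : ⁅(⊤ : Subgroup (FreeGroup (Fin d))), (⊤ : Subgroup (FreeGroup (Fin d)))⁆ ≤
      α₀.ker := by
    rw [Subgroup.commutator_le]
    intro g₁ _ g₂ _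
    rw [MonoidHom.mem_ker, map_commutatorElement]
    exact commutatorElement_eq_one_iff_commute.mpr (Commute.all _ _)
  have hαK : K ≤ α₀.ker := (Subgroup.commutator_mono le_top le_rfl).trans hα₀comm
  let α : FreeGroup (Fin d) ⧸ K →* Multiplicative (Fin d → ℤ) := QuotientGroup.lift K α₀ hαK
  obtain ⟨w, hw⟩ := MonoidHom.mem_range.mp (himage (Subgroup.mem_map_of_mem μ hxN))
  have hterm : ∀ (v : Multiplicative (Fin d → ℤ)) (i : Fin d),
      α ((zpowersHom _ (μ (r i))) (e v i)) =
        ofAdd ((Multiplicative.toAdd v i) • Pi.single i (m i : ℤ)) := by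
    intro v i
    rw [zpowersHom_apply, map_zpow]
    have hμ : α (μ (r i)) = ofAdd (Pi.single i (m i : ℤ)) := by
      show α₀ (r i) = _
      rw [hr]
      show α₀ (FreeGroup.of i ^ (m i)) = _
      rw [map_pow, FreeGroup.lift_apply_of]
      apply Multiplicative.toAdd.injective
      rw [toAdd_pow, toAdd_ofAdd, toAdd_ofAdd]
      funext j
      rcases eq_or_ne j i with rfl | hji
      · simp
      · simp [Pi.single_apply, hji]
    rw [hμ, ← ofAdd_zsmul]
    rfl
  have hαβ : ∀ v : Multiplicative (Fin d → ℤ),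
      α (β v) = ofAdd (fun j => (Multiplicative.toAdd v j) * (m j : ℤ)) := by
    intro v
    show α (Finset.univ.noncommProd (fun i => (zpowersHom _ (μ (r i))) (e v i))
      (fun a _ b _ hab => hpair hab _ _)) = _
    refine (Finset.map_noncommProd _ _ _ α).trans ?_
    rw [Finset.noncommProd_eq_prod]
    calc (∏ i, α ((zpowersHom _ (μ (r i))) (e v i)))
        = ∏ i, ofAdd ((Multiplicative.toAdd v i) • Pi.single i (m i : ℤ)) :=
          Finset.prod_congr rfl (fun i _ => hterm v i)
      _ = ofAdd (∑ i, (Multiplicative.toAdd v i) • Pi.single i (m i : ℤ)) :=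
          (ofAdd_sum _ _).symm
      _ = ofAdd (fun j => (Multiplicative.toAdd v j) * (m j : ℤ)) := by
          congr 1
          funext j
          rw [Finset.sum_apply]
          simp [Pi.single_apply, smul_ite]
  have hαx : α (μ x) = 1 := by
    show α₀ x = 1
    exact MonoidHom.mem_ker.mp (hα₀comm hxc)
  rw [← hw, hαβ] at hαx
  have hz : ∀ j, Multiplicative.toAdd w j * (m j : ℤ) = 0 := by
    intro j
    have hcf := congrFun (congrArg Multiplicative.toAdd hαx) j
    simpa using hcf
  have hw0 : w = 1 := by
    apply Multiplicative.toAdd.injective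
    show Multiplicative.toAdd w = Multiplicative.toAdd (1 : Multiplicative (Fin d → ℤ))
    funext j
    rw [toAdd_one, Pi.zero_apply]
    rcases mul_eq_zero.mp (hz j) with h | h
    · exact h
    · exact absurd (Int.natCast_eq_zero.mp h) (hm j)
  rw [hw0, map_one] at hw
  have hker : x ∈ μ.ker := MonoidHom.mem_ker.mpr hw.symm
  rwa [QuotientGroup.ker_mk'] at hker



open Multiplicative Subgroup

lemma commElt_eq_left {Q : Type*} [Group Q] {a b : Q} (c : Q)
    (h : a⁻¹ * b ∈ Subgroup.center Q) : ⁅a, c⁆ = ⁅b, c⁆ := by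
  have hc : c * (a⁻¹ * b) = (a⁻¹ * b) * c := Subgroup.mem_center_iff.mp h c
  have h2 : (a⁻¹ * b) * c * (a⁻¹ * b)⁻¹ = c := by rw [← hc, mul_inv_cancel_right]
  have hb : b = a * (a⁻¹ * b) := (mul_inv_cancel_left a b).symm
  calc ⁅a, c⁆ = a * ((a⁻¹ * b) * c * (a⁻¹ * b)⁻¹) * a⁻¹ * c⁻¹ := by rw [h2]; rfl
    _ = (a * (a⁻¹ * b)) * c * (a * (a⁻¹ * b))⁻¹ * c⁻¹ := by group
    _ = ⁅b, c⁆ := by rw [← hb]; rfl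

lemma commElt_eq_right {Q : Type*} [Group Q] (c : Q) {a b : Q}
    (h : a⁻¹ * b ∈ Subgroup.center Q) : ⁅c, a⁆ = ⁅c, b⁆ := by
  rw [← commutatorElement_inv, commElt_eq_left c h, commutatorElement_inv]

lemma finite_commutatorSet_of_finite_quotient_center {Q : Type*} [Group Q]
    [Finite (Q ⧸ Subgroup.center Q)] : Finite (commutatorSet Q) := by
  have hsub : commutatorSet Q ⊆ Set.range
      (fun p : (Q ⧸ Subgroup.center Q) × (Q ⧸ Subgroup.center Q) =>
        ⁅Quotient.out p.1, Quotient.out p.2⁆) := by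
    rintro _ ⟨g₁, g₂, rfl⟩
    refine ⟨(QuotientGroup.mk g₁, QuotientGroup.mk g₂), ?_⟩
    have h1 : ((QuotientGroup.mk g₁ : Q ⧸ Subgroup.center Q)).out⁻¹ * g₁ ∈
        Subgroup.center Q := by
      rw [← QuotientGroup.eq]
      exact QuotientGroup.out_eq' _
    have h2 : ((QuotientGroup.mk g₂ : Q ⧸ Subgroup.center Q)).out⁻¹ * g₂ ∈
        Subgroup.center Q := by
      rw [← QuotientGroup.eq]
      exact QuotientGroup.out_eq' _
    show ⁅(QuotientGroup.mk g₁ : Q ⧸ Subgroup.center Q).out,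
        (QuotientGroup.mk g₂ : Q ⧸ Subgroup.center Q).out⁆ = ⁅g₁, g₂⁆
    rw [commElt_eq_left _ h1, commElt_eq_right _ h2]
  exact (Set.Finite.subset (Set.finite_range _) hsub).to_subtype

lemma quot_commutator_comm {Q : Type*} [Group Q] (x y : Q ⧸ _root_.commutator Q) :
    Commute x y := by
  induction x using QuotientGroup.induction_on with
  | H a =>
    induction y using QuotientGroup.induction_on with
    | H b =>
      have key : (QuotientGroup.mk (a * b) : Q ⧸ _root_.commutator Q) =
          QuotientGroup.mk (b * a) := by
        rw [QuotientGroup.eq]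
        have hab : (a * b)⁻¹ * (b * a) = ⁅b⁻¹, a⁻¹⁆ := by group
        rw [hab, commutator_def]
        exact Subgroup.commutator_mem_commutator (Subgroup.mem_top _) (Subgroup.mem_top _)
      simpa [QuotientGroup.mk_mul, Commute, SemiconjBy] using key

lemma finite_step {d : ℕ} (m : Fin d → ℕ) (hm : ∀ i, m i ≠ 0)
    (R : Subgroup (FreeProdCyclic m)) [R.Normal] [hfin : Finite (FreeProdCyclic m ⧸ R)] :
    Finite (FreeProdCyclic m ⧸ ⁅R, (⊤ : Subgroup (FreeProdCyclic m))⁆) := by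
  classical
  set K := ⁅R, (⊤ : Subgroup (FreeProdCyclic m))⁆ with hKdef
  have hKR : K ≤ R := Subgroup.commutator_le_left R ⊤
  set Rbar := R.map (QuotientGroup.mk' K) with hRbardef
  have e1 := QuotientGroup.quotientQuotientEquivQuotient K R hKR
  haveI hf1 : Finite ((FreeProdCyclic m ⧸ K) ⧸ Rbar) := Finite.of_equiv _ e1.symm.toEquiv
  have hcen : Rbar ≤ Subgroup.center (FreeProdCyclic m ⧸ K) := by
    rintro _ ⟨r, hr, rfl⟩
    exact mk_commutator_central R hr
  haveI hf2 : Finite ((FreeProdCyclic m ⧸ K) ⧸ Subgroup.center (FreeProdCyclic m ⧸ K)) := by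
    have hs : Function.Surjective (QuotientGroup.map Rbar
        (Subgroup.center (FreeProdCyclic m ⧸ K)) (MonoidHom.id _)
        (by rw [Subgroup.comap_id]; exact hcen)) := by
      intro y
      induction y using QuotientGroup.induction_on with
      | H q => exact ⟨QuotientGroup.mk q, rfl⟩
    exact Finite.of_surjective _ hs
  haveI := finite_commutatorSet_of_finite_quotient_center (Q := FreeProdCyclic m ⧸ K)
  haveI hfc : Finite (_root_.commutator (FreeProdCyclic m ⧸ K)) := inferInstance
  haveI : ∀ i, NeZero (m i) := fun i => ⟨hm i⟩
  let κ : FreeProdCyclic m →* (FreeProdCyclic m ⧸ K) ⧸ _root_.commutator (FreeProdCyclic m ⧸ K) :=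
    (QuotientGroup.mk' _).comp (QuotientGroup.mk' K)
  have hκ : Function.Surjective κ :=
    (QuotientGroup.mk'_surjective _).comp (QuotientGroup.mk'_surjective K)
  have hpow : ∀ i, (κ (cyclicGen m i)) ^ (m i) = 1 := fun i => by
    rw [← map_pow, cyclicGen_pow, map_one]
  let h : (∀ i, Multiplicative (ZMod (m i))) →*
      (FreeProdCyclic m ⧸ K) ⧸ _root_.commutator (FreeProdCyclic m ⧸ K) :=
    MonoidHom.noncommPiCoprod (fun i => zmodHom (hm i) (κ (cyclicGen m i)) (hpow i))
      (fun i j _ => fun x y => quot_commutator_comm _ _)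
  have hclosure : Subgroup.closure (κ '' Set.range (cyclicGen m)) ≤ h.range := by
    rw [Subgroup.closure_le]
    rintro _ ⟨_, ⟨i, rfl⟩, rfl⟩
    exact MonoidHom.mem_range.mpr ⟨Pi.mulSingle i (ofAdd 1),
      (MonoidHom.noncommPiCoprod_mulSingle _ _ _).trans (zmodHom_ofAdd_one _ _ _)⟩
  have hsurj_h : Function.Surjective h := by
    rw [← MonoidHom.range_eq_top]
    rw [eq_top_iff]
    calc (⊤ : Subgroup _) = Subgroup.map κ ⊤ := (Subgroup.map_top_of_surjective κ hκ).symm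
      _ = Subgroup.map κ (Subgroup.closure (Set.range (cyclicGen m))) :=
          (congrArg _ (closure_range_cyclicGen hm)).symm
      _ = Subgroup.closure (κ '' Set.range (cyclicGen m)) := MonoidHom.map_closure κ _
      _ ≤ h.range := hclosure
  haveI hfa : Finite ((FreeProdCyclic m ⧸ K) ⧸ _root_.commutator (FreeProdCyclic m ⧸ K)) :=
    Finite.of_surjective h hsurj_h
  exact Finite.of_equiv _
    (Subgroup.groupEquivQuotientProdSubgroup
      (s := _root_.commutator (FreeProdCyclic m ⧸ K))).symm



open Multiplicative Subgroup

lemma order_image {d : ℕ} {m : Fin d → ℕ} (hm : ∀ i, m i ≠ 0)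
    (R' : Subgroup (FreeProdCyclic m)) [R'.Normal]
    (hle : R' ≤ ⁅(⊤ : Subgroup (FreeProdCyclic m)), (⊤ : Subgroup (FreeProdCyclic m))⁆)
    (i : Fin d) :
    orderOf (QuotientGroup.mk' R' (cyclicGen m i)) = m i := by
  classical
  have h1 : (QuotientGroup.mk' R' (cyclicGen m i)) ^ (m i) = 1 := by
    rw [← map_pow, cyclicGen_pow, map_one]
  have hdvd : orderOf (QuotientGroup.mk' R' (cyclicGen m i)) ∣ m i :=
    orderOf_dvd_of_pow_eq_one h1
  have hgpow : ∀ j : Fin d,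
      (if j = i then ofAdd (1 : ZMod (m i)) else 1) ^ (m j) = 1 := by
    intro j
    by_cases hji : j = i
    · subst hji
      rw [if_pos rfl]
      exact ofAdd_one_pow (m j)
    · rw [if_neg hji, one_pow]
  let χ : FreeProdCyclic m →* Multiplicative (ZMod (m i)) :=
    Monoid.CoprodI.lift
      (fun j => zmodHom (hm j) (if j = i then ofAdd (1 : ZMod (m i)) else 1) (hgpow j))
  have hχgen : χ (cyclicGen m i) = ofAdd (1 : ZMod (m i)) := by
    rw [cyclicGen, Monoid.CoprodI.lift_of, zmodHom_ofAdd_one, if_pos rfl]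
  have hker : R' ≤ χ.ker := by
    refine hle.trans ?_
    rw [Subgroup.commutator_le]
    intro g₁ _ g₂ _
    rw [MonoidHom.mem_ker, map_commutatorElement]
    exact commutatorElement_eq_one_iff_commute.mpr (Commute.all _ _)
  have h2 : (QuotientGroup.lift R' χ hker) (QuotientGroup.mk' R' (cyclicGen m i)) =
      ofAdd (1 : ZMod (m i)) := by
    show χ (cyclicGen m i) = _
    exact hχgen
  have h3 : m i ∣ orderOf (QuotientGroup.mk' R' (cyclicGen m i)) := by
    have hmap := orderOf_map_dvd (QuotientGroup.lift R' χ hker)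
      (QuotientGroup.mk' R' (cyclicGen m i))
    rw [h2, orderOf_ofAdd_eq_addOrderOf, ZMod.addOrderOf_one] at hmap
    exact hmap
  exact Nat.dvd_antisymm hdvd h3

lemma iterComm_le_commutator {F : Type*} [Group F] (R : Subgroup F) {k : ℕ} (hk : 1 ≤ k) :
    iterComm R k ≤ ⁅(⊤ : Subgroup F), (⊤ : Subgroup F)⁆ := by
  obtain ⟨j, rfl⟩ : ∃ j, k = j + 1 := ⟨k - 1, (Nat.succ_pred_eq_of_pos hk).symm⟩
  show ⁅iterComm R j, (⊤ : Subgroup F)⁆ ≤ _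
  exact Subgroup.commutator_mono le_top le_rfl

lemma ker_iterCommTrans {F : Type*} [Group F] (R : Subgroup F) [R.Normal] (k : ℕ) :
    (iterCommTrans R k).ker = (iterComm R k).map (QuotientGroup.mk' (iterComm R (k + 1))) := by
  ext y
  induction y using QuotientGroup.induction_on with
  | H f =>
    rw [MonoidHom.mem_ker]
    constructor
    · intro h
      have h2 : f ∈ iterComm R k := by
        simp only [iterCommTrans] at h
        rw [QuotientGroup.map_mk, MonoidHom.id_apply, QuotientGroup.eq_one_iff] at h
        exact h
      exact Subgroup.mem_map.mpr ⟨f, h2, rfl⟩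
    · rintro ⟨r, hr, heq⟩
      rw [← heq]
      simp only [iterCommTrans]
      rw [QuotientGroup.map_mk', MonoidHom.id_apply]
      exact (QuotientGroup.eq_one_iff r).mpr hr

lemma ker_trans_iso {d : ℕ} {m : Fin d → ℕ} (hm : ∀ i, m i ≠ 0)
    (R : Subgroup (FreeProdCyclic m)) [R.Normal] (k : ℕ) (hk : 1 ≤ k) :
    Nonempty (↥(iterCommTrans R k).ker ≃* H2Z (FreeProdCyclic m ⧸ iterComm R k)) := by
  classical
  let L : FreeGroup (FreeProdCyclic m) →* FreeProdCyclic m := FreeGroup.lift id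
  have hL : Function.Surjective L := fun g => ⟨FreeGroup.of g, FreeGroup.lift_apply_of⟩
  let q := QuotientGroup.mk' (iterComm R k)
  let p : FreeGroup (FreeProdCyclic m) →* FreeProdCyclic m ⧸ iterComm R k := q.comp L
  have hp : Function.Surjective p := (QuotientGroup.mk'_surjective _).comp hL
  let pE : FreeGroup (FreeProdCyclic m ⧸ iterComm R k) →* FreeProdCyclic m ⧸ iterComm R k :=
    FreeGroup.lift id
  have hpE : Function.Surjective pE := fun g => ⟨FreeGroup.of g, FreeGroup.lift_apply_of⟩
  obtain ⟨e1⟩ := hopf_indep pE p hpE hp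
  -- Hopf triviality for L.ker
  have htrivN : Subsingleton (hopfQuotient (pFC m).ker) := by
    rw [hopf_subsingleton_iff]
    intro x hx hxk
    rw [ker_pFC hm] at hxk
    rw [ker_pFC hm]
    exact hopf_trivial_relN hm x hx hxk
  have htrivL : Subsingleton (hopfQuotient L.ker) := by
    obtain ⟨eiso⟩ := hopf_indep (pFC m) L (pFC_surjective hm) hL
    haveI := htrivN
    exact eiso.symm.toEquiv.subsingleton
  have htriv : ∀ z ∈ ⁅(⊤ : Subgroup (FreeGroup (FreeProdCyclic m))),
      (⊤ : Subgroup (FreeGroup (FreeProdCyclic m)))⁆, z ∈ L.ker →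
      z ∈ ⁅L.ker, (⊤ : Subgroup (FreeGroup (FreeProdCyclic m)))⁆ :=
    (hopf_subsingleton_iff _).mp htrivL
  -- kernel facts
  have hpker : ∀ x, x ∈ p.ker ↔ L x ∈ iterComm R k := by
    intro x
    rw [MonoidHom.mem_ker]
    show q (L x) = 1 ↔ _
    rw [← MonoidHom.mem_ker, QuotientGroup.ker_mk']
  have hcomap : p.ker = Subgroup.comap L (iterComm R k) := by
    ext x
    rw [Subgroup.mem_comap]
    exact hpker x
  have hmapker : Subgroup.map L p.ker = iterComm R k := by
    rw [hcomap]
    exact Subgroup.map_comap_eq_self_of_surjective hL _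
  have hmaptop : Subgroup.map L ⊤ = ⊤ := Subgroup.map_top_of_surjective L hL
  have hmapcomm : Subgroup.map L ⁅p.ker, (⊤ : Subgroup (FreeGroup (FreeProdCyclic m)))⁆ =
      ⁅iterComm R k, (⊤ : Subgroup (FreeProdCyclic m))⁆ := by
    rw [Subgroup.map_commutator, hmapker, hmaptop]
  have hmapcommtop : Subgroup.map L ⁅(⊤ : Subgroup (FreeGroup (FreeProdCyclic m))),
      (⊤ : Subgroup (FreeGroup (FreeProdCyclic m)))⁆ =
      ⁅(⊤ : Subgroup (FreeProdCyclic m)), (⊤ : Subgroup (FreeProdCyclic m))⁆ := by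
    rw [Subgroup.map_commutator, hmaptop]
  -- the homomorphism Ψ
  let ν := QuotientGroup.mk' (iterComm R (k + 1))
  have hmemker : ∀ x : ↥(⁅(⊤ : Subgroup (FreeGroup (FreeProdCyclic m))),
      (⊤ : Subgroup (FreeGroup (FreeProdCyclic m)))⁆ ⊓ p.ker),
      (ν.comp L) ↑x ∈ (iterCommTrans R k).ker := by
    intro x
    rw [ker_iterCommTrans]
    exact Subgroup.mem_map.mpr ⟨L ↑x, (hpker _).mp (Subgroup.mem_inf.mp x.2).2, rfl⟩
  let Ψ : ↥(⁅(⊤ : Subgroup (FreeGroup (FreeProdCyclic m))),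
      (⊤ : Subgroup (FreeGroup (FreeProdCyclic m)))⁆ ⊓ p.ker) →*
      ↥(iterCommTrans R k).ker :=
    ((ν.comp L).domRestrict _).codRestrict _ hmemker
  have hΨsurj : Function.Surjective Ψ := by
    rintro ⟨y, hy⟩
    rw [ker_iterCommTrans] at hy
    obtain ⟨f, hf, hfy⟩ := Subgroup.mem_map.mp hy
    have hfcomm : f ∈ ⁅(⊤ : Subgroup (FreeProdCyclic m)), (⊤ : Subgroup (FreeProdCyclic m))⁆ :=
      iterComm_le_commutator R hk hf
    rw [← hmapcommtop] at hfcomm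
    obtain ⟨x, hx, hxf⟩ := Subgroup.mem_map.mp hfcomm
    have hxker : x ∈ p.ker := (hpker x).mpr (by rw [hxf]; exact hf)
    refine ⟨⟨x, Subgroup.mem_inf.mpr ⟨hx, hxker⟩⟩, ?_⟩
    apply Subtype.ext
    show ν (L x) = y
    rw [hxf, ← hfy]
  have hLkerle : L.ker ≤ p.ker := by
    intro t ht
    exact (hpker t).mpr (by rw [MonoidHom.mem_ker.mp ht]; exact (iterComm R k).one_mem)
  have hΨker : Ψ.ker = (⁅p.ker, (⊤ : Subgroup (FreeGroup (FreeProdCyclic m)))⁆).subgroupOf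
      (⁅(⊤ : Subgroup (FreeGroup (FreeProdCyclic m))),
        (⊤ : Subgroup (FreeGroup (FreeProdCyclic m)))⁆ ⊓ p.ker) := by
    ext x
    rw [MonoidHom.mem_ker, Subgroup.mem_subgroupOf]
    have hx1 : (Ψ x = 1) ↔ ν (L ↑x) = 1 := by
      rw [Subtype.ext_iff]
      rfl
    have hx2 : ν (L ↑x) = 1 ↔ L ↑x ∈ iterComm R (k + 1) := by
      rw [← MonoidHom.mem_ker, QuotientGroup.ker_mk']
    rw [hx1, hx2]
    constructor
    · intro hLx
      have hLx' : L ↑x ∈ Subgroup.map L ⁅p.ker, (⊤ : Subgroup (FreeGroup (FreeProdCyclic m)))⁆ := by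
        rw [hmapcomm]
        exact hLx
      obtain ⟨y, hy, hyx⟩ := Subgroup.mem_map.mp hLx'
      have hz : (↑x : FreeGroup (FreeProdCyclic m)) * y⁻¹ ∈ L.ker := by
        rw [MonoidHom.mem_ker]
        simp [hyx]
      have hzc : (↑x : FreeGroup (FreeProdCyclic m)) * y⁻¹ ∈
          ⁅(⊤ : Subgroup (FreeGroup (FreeProdCyclic m))),
            (⊤ : Subgroup (FreeGroup (FreeProdCyclic m)))⁆ :=
        mul_mem (Subgroup.mem_inf.mp x.2).1
          (inv_mem (Subgroup.commutator_mono le_top le_rfl hy))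
      have hzk := htriv _ hzc hz
      have hle2 : ⁅L.ker, (⊤ : Subgroup (FreeGroup (FreeProdCyclic m)))⁆ ≤
          ⁅p.ker, (⊤ : Subgroup (FreeGroup (FreeProdCyclic m)))⁆ :=
        Subgroup.commutator_mono hLkerle le_rfl
      have hxy : (↑x : FreeGroup (FreeProdCyclic m)) = (↑x * y⁻¹) * y := by group
      rw [hxy]
      exact mul_mem (hle2 hzk) hy
    · intro hx
      have hmem := Subgroup.mem_map_of_mem L hx
      rw [hmapcomm] at hmem
      exact hmem
  let e2a : hopfQuotient p.ker ≃*
      (↥(⁅(⊤ : Subgroup (FreeGroup (FreeProdCyclic m))),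
        (⊤ : Subgroup (FreeGroup (FreeProdCyclic m)))⁆ ⊓ p.ker) ⧸ Ψ.ker) :=
    QuotientGroup.quotientMulEquivOfEq hΨker.symm
  let e2b := QuotientGroup.quotientKerEquivOfSurjective Ψ hΨsurj
  exact ⟨(e1.trans (e2a.trans e2b)).symm⟩


end SchurAux

theorem iterComm_tower_locally_unitary_schur_covers {d : ℕ} (m : Fin d → ℕ)
    (hm : ∀ i, m i ≠ 0) {G : Type*} [Group G] [Finite G]
    (π : FreeProdCyclic m →* G) (hsurj : Function.Surjective π)
    (k : ℕ) (hk : 1 ≤ k) :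
    Finite (FreeProdCyclic m ⧸ iterComm π.ker k) ∧
    iterComm π.ker k ≤ ⁅(⊤ : Subgroup (FreeProdCyclic m)), (⊤ : Subgroup (FreeProdCyclic m))⁆ ∧
    (iterCommTrans π.ker k).ker ≤
      Subgroup.center (FreeProdCyclic m ⧸ iterComm π.ker (k + 1)) ∧
    (iterCommTrans π.ker k).ker ≤
      ⁅(⊤ : Subgroup (FreeProdCyclic m ⧸ iterComm π.ker (k + 1))),
        (⊤ : Subgroup (FreeProdCyclic m ⧸ iterComm π.ker (k + 1)))⁆ ∧
    Nonempty (↥(iterCommTrans π.ker k).ker ≃* H2Z (FreeProdCyclic m ⧸ iterComm π.ker k)) ∧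
    (∀ i, orderOf (QuotientGroup.mk' (iterComm π.ker (k + 1)) (cyclicGen m i)) = m i) ∧
    (∀ i, orderOf (QuotientGroup.mk' (iterComm π.ker k) (cyclicGen m i)) = m i) := by
  have hfin : ∀ j, Finite (FreeProdCyclic m ⧸ iterComm π.ker j) := by
    intro j
    induction j with
    | zero =>
      exact Finite.of_equiv G (QuotientGroup.quotientKerEquivOfSurjective π hsurj).symm.toEquiv
    | succ j ih =>
      haveI := ih
      exact SchurAux.finite_step m hm (iterComm π.ker j)
  have hcent : (iterCommTrans π.ker k).ker ≤
      Subgroup.center (FreeProdCyclic m ⧸ iterComm π.ker (k + 1)) := by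
    intro y hy
    rw [SchurAux.ker_iterCommTrans] at hy
    obtain ⟨r, hr, rfl⟩ := Subgroup.mem_map.mp hy
    exact SchurAux.mk_commutator_central (iterComm π.ker k) hr
  have hcomm : (iterCommTrans π.ker k).ker ≤
      ⁅(⊤ : Subgroup (FreeProdCyclic m ⧸ iterComm π.ker (k + 1))),
        (⊤ : Subgroup (FreeProdCyclic m ⧸ iterComm π.ker (k + 1)))⁆ := by
    intro y hy
    rw [SchurAux.ker_iterCommTrans] at hy
    obtain ⟨r, hr, rfl⟩ := Subgroup.mem_map.mp hy
    have h1 : r ∈ ⁅(⊤ : Subgroup (FreeProdCyclic m)), (⊤ : Subgroup (FreeProdCyclic m))⁆ :=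
      SchurAux.iterComm_le_commutator π.ker hk hr
    have h2 := Subgroup.mem_map_of_mem (QuotientGroup.mk' (iterComm π.ker (k + 1))) h1
    rw [Subgroup.map_commutator,
      Subgroup.map_top_of_surjective _ (QuotientGroup.mk'_surjective _)] at h2
    exact h2
  exact ⟨hfin k, SchurAux.iterComm_le_commutator π.ker hk, hcent, hcomm,
    SchurAux.ker_trans_iso hm π.ker k hk,
    fun i => SchurAux.order_image hm _ (SchurAux.iterComm_le_commutator π.ker
      (Nat.succ_le_succ (Nat.zero_le k))) i,
    fun i => SchurAux.order_image hm _ (SchurAux.iterComm_le_commutator π.ker hk) i⟩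
end

section
/- Existence of smooth covers: let G be a finite group generated by g₁, …, g_d with m_i = o(g_i). Let F = ⟨f₁⟩ ∗ ⋯ ∗ ⟨f_d⟩ with f_i of order m_i, π : F → G defined by f_i ↦ g_i, R = ker π, and E = F/[R,F]. Let F̃ = ∗_{i=1,…,d; j=1,…,m_i} ⟨f_{i,j}⟩ with each ⟨f_{i,j}⟩ cyclic of order m_i, and π̃ : F̃ → G defined by f_{i,j} ↦ g_i. Let f_* = f_{1,1}⋯f_{1,m₁}·f_{2,1}⋯f_{2,m₂}⋯f_{d,1}⋯f_{d,m_d}, let Δ̃ = F̃/⟨f_*⟩^{F̃} (quotient by the normal closure of f_*, which lies in ker π̃), let S̃ be the kernel of the induced surjection Δ̃ → G, and let D̃ = Δ̃/[S̃,Δ̃]. Then there is a surjective group homomorphism D̃ → E carrying the class of f_{i,j} to the class of f_i and commuting with the projections onto G. -/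
/-- The homomorphism from the cyclic group of order `orderOf g` (written multiplicatively)
to `G` sending the canonical generator to `g`. -/
noncomputable def cycHom {G : Type*} [Group G] (g : G) (hg : orderOf g ≠ 0) :
    Multiplicative (ZMod (orderOf g)) →* G where
  toFun x := g ^ (haveI : NeZero (orderOf g) := ⟨hg⟩; (Multiplicative.toAdd x).val)
  map_one' := by
    haveI : NeZero (orderOf g) := ⟨hg⟩
    show g ^ (Multiplicative.toAdd (1 : Multiplicative (ZMod (orderOf g)))).val = 1
    simp
  map_mul' x y := by
    haveI : NeZero (orderOf g) := ⟨hg⟩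
    show g ^ (Multiplicative.toAdd (x * y)).val = _ * _
    rw [← pow_add, pow_eq_pow_iff_modEq, toAdd_mul, ZMod.val_add]
    exact Nat.mod_modEq _ _


theorem cycHom_pow_order {G : Type*} [Group G] (g : G) (hg : orderOf g ≠ 0)
    (x : Multiplicative (ZMod (orderOf g))) : (cycHom g hg x) ^ orderOf g = 1 := by
  show (g ^ _) ^ orderOf g = 1
  rw [← pow_mul, mul_comm, pow_mul, pow_orderOf_eq_one, one_pow]

namespace SmoothCover

variable {d : ℕ} {G : Type*} [Group G] [Finite G] (g : Fin d → G)

/-- `F = ⟨f₁⟩ ∗ ⋯ ∗ ⟨f_d⟩` with `fᵢ` of order `mᵢ = o(gᵢ)`. -/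
abbrev F (g : Fin d → G) : Type _ := FreeProdCyclic (fun i : Fin d => orderOf (g i))

/-- The projection `π : F → G`, `fᵢ ↦ gᵢ`. -/
noncomputable def proj : F g →* G :=
  Monoid.CoprodI.lift (fun i : Fin d => cycHom (g i) (orderOf_pos (g i)).ne')

/-- The locally unitary cover `E = F/[R,F]`, `R = ker π`. -/
abbrev E : Type _ := F g ⧸ ⁅(proj g).ker, (⊤ : Subgroup (F g))⁆

/-- The index set of the cloned generators `f_{i,j}`, `1 ≤ j ≤ mᵢ`. -/
abbrev CloneIdx (g : Fin d → G) : Type _ := (i : Fin d) × Fin (orderOf (g i))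

/-- The cloned free product `F̃ = ∗_{i,j} ⟨f_{i,j}⟩`, `f_{i,j}` of order `mᵢ`. -/
abbrev TildeF (g : Fin d → G) : Type _ :=
  FreeProdCyclic (fun x : CloneIdx g => orderOf (g x.1))

/-- The projection `π̃ : F̃ → G`, `f_{i,j} ↦ gᵢ`. -/
noncomputable def tildeProj : TildeF g →* G :=
  Monoid.CoprodI.lift (fun x : CloneIdx g => cycHom (g x.1) (orderOf_pos (g x.1)).ne')

/-- The element `f_* = f_{1,1}⋯f_{1,m₁}·f_{2,1}⋯f_{2,m₂}⋯f_{d,1}⋯f_{d,m_d}` of `F̃`. -/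
noncomputable def fstar (g : Fin d → G) : TildeF g :=
  ((List.finRange d).map (fun i : Fin d =>
    ((List.finRange (orderOf (g i))).map (fun j =>
      cyclicGen (fun x : CloneIdx g => orderOf (g x.1)) ⟨i, j⟩)).prod)).prod

theorem tildeProj_fstar : tildeProj g (fstar g) = 1 := by
  rw [fstar, map_list_prod, List.map_map]
  refine List.prod_eq_one ?_
  intro x hx
  simp only [List.mem_map, Function.comp] at hx
  obtain ⟨i, -, rfl⟩ := hx
  have key : ∀ L : List (Fin (orderOf (g i))),
      tildeProj g ((L.map (fun j =>
          cyclicGen (fun x : CloneIdx g => orderOf (g x.1)) ⟨i, j⟩)).prod) =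
        (cycHom (g i) (orderOf_pos (g i)).ne' (Multiplicative.ofAdd 1)) ^ L.length := by
    intro L
    induction L with
    | nil => simp
    | cons a L ih =>
        rw [List.map_cons, List.prod_cons, map_mul, ih, List.length_cons]
        have h1 : tildeProj g (cyclicGen (fun x : CloneIdx g => orderOf (g x.1)) ⟨i, a⟩) =
            cycHom (g i) (orderOf_pos (g i)).ne' (Multiplicative.ofAdd 1) := by
          simp [tildeProj, cyclicGen, Monoid.CoprodI.lift_of]
        rw [h1, ← pow_succ']
  rw [key, List.length_finRange]
  exact cycHom_pow_order _ _ _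

/-- `Δ̃ = F̃ / ⟨f_*⟩^{F̃}`, the quotient by the normal closure of `f_*`. -/
abbrev TildeDelta (g : Fin d → G) : Type _ := TildeF g ⧸ Subgroup.normalClosure {fstar g}

/-- The induced projection `Δ̃ → G` (well defined since `f_* ∈ ker π̃`). -/
noncomputable def deltaProj : TildeDelta g →* G :=
  QuotientGroup.lift _ (tildeProj g)
    (fun x hx => MonoidHom.mem_ker.mp
      (Subgroup.normalClosure_le_normal
        (by simpa using MonoidHom.mem_ker.mpr (tildeProj_fstar g)) hx))

/-- The smooth central extension `D̃ = Δ̃/[S̃,Δ̃]`, `S̃ = ker(Δ̃ → G)`. -/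
abbrev TildeD (g : Fin d → G) : Type _ :=
  TildeDelta g ⧸ ⁅(deltaProj g).ker, (⊤ : Subgroup (TildeDelta g))⁆

/-- The projection `E → G`. -/
noncomputable def coverProjE : E g →* G :=
  QuotientGroup.lift _ (proj g)
    (fun x hx => MonoidHom.mem_ker.mp (Subgroup.commutator_le_left _ _ hx))

/-- The projection `D̃ → G`. -/
noncomputable def coverProjD : TildeD g →* G :=
  QuotientGroup.lift _ (deltaProj g)
    (fun x hx => MonoidHom.mem_ker.mp (Subgroup.commutator_le_left _ _ hx))


/-- The fold map `φ : F̃ → F`, `f_{i,j} ↦ fᵢ`. -/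
noncomputable def phi : TildeF g →* F g :=
  Monoid.CoprodI.lift (fun x : CloneIdx g =>
    (Monoid.CoprodI.of (M := fun i : Fin d => Multiplicative (ZMod (orderOf (g i)))) (i := x.1)))

theorem proj_phi (w : TildeF g) : proj g (phi g w) = tildeProj g w := by
  induction w using Monoid.CoprodI.induction_on with
  | one => simp
  | of i m =>
      simp only [phi, tildeProj, proj, Monoid.CoprodI.lift_of]
  | mul x y hx hy => simp [map_mul, hx, hy]

theorem phi_surjective : Function.Surjective (phi g) := by
  intro w
  induction w using Monoid.CoprodI.induction_on with
  | one => exact ⟨1, map_one _⟩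
  | of i m =>
      exact ⟨Monoid.CoprodI.of (M := fun x : CloneIdx g => Multiplicative (ZMod (orderOf (g x.1)))) (i := (⟨i, ⟨0, orderOf_pos (g i)⟩⟩ : CloneIdx g)) m,
        by simp [phi, Monoid.CoprodI.lift_of]⟩
  | mul x y hx hy =>
      obtain ⟨a, rfl⟩ := hx; obtain ⟨b, rfl⟩ := hy
      exact ⟨a * b, map_mul _ _ _⟩

theorem phi_cyclicGen (x : CloneIdx g) :
    phi g (cyclicGen (fun x : CloneIdx g => orderOf (g x.1)) x) =
      cyclicGen (fun i : Fin d => orderOf (g i)) x.1 := by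
  simp [phi, cyclicGen, Monoid.CoprodI.lift_of]

theorem phi_fstar : phi g (fstar g) = 1 := by
  rw [fstar, map_list_prod, List.map_map]
  refine List.prod_eq_one ?_
  intro w hw
  simp only [List.mem_map, Function.comp] at hw
  obtain ⟨i, -, rfl⟩ := hw
  rw [map_list_prod, List.map_map]
  have : ∀ j : Fin (orderOf (g i)),
      (phi g ∘ fun j : Fin (orderOf (g i)) =>
        cyclicGen (fun x : CloneIdx g => orderOf (g x.1)) ⟨i, j⟩) j =
      cyclicGen (fun i : Fin d => orderOf (g i)) i := fun j => phi_cyclicGen g ⟨i, j⟩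
  rw [List.map_congr_left (fun j _ => this j), List.map_const', List.prod_replicate,
    List.length_finRange]
  rw [cyclicGen, ← map_pow]
  convert map_one (Monoid.CoprodI.of (M := fun i : Fin d => Multiplicative (ZMod (orderOf (g i)))) (i := i))
  rw [← ofAdd_nsmul]
  simp [ZMod.natCast_self]

/-!
STATEMENT 14 (Existence of smooth covers): let `G` be a finite group generated by
`g₁, …, g_d` with `mᵢ = o(gᵢ)`.  Let `F = ⟨f₁⟩ ∗ ⋯ ∗ ⟨f_d⟩` with `fᵢ` of order `mᵢ`,
`π : F → G` defined by `fᵢ ↦ gᵢ`, `R = ker π`, and `E = F/[R,F]`.  Let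
`F̃ = ∗_{i,j} ⟨f_{i,j}⟩` with each `⟨f_{i,j}⟩` cyclic of order `mᵢ`, and `π̃ : F̃ → G`
defined by `f_{i,j} ↦ gᵢ`.  Let `f_* = f_{1,1}⋯f_{1,m₁}⋯f_{d,1}⋯f_{d,m_d}`, let
`Δ̃ = F̃/⟨f_*⟩^{F̃}` (quotient by the normal closure of `f_*`, which lies in `ker π̃`),
let `S̃` be the kernel of the induced surjection `Δ̃ → G`, and let `D̃ = Δ̃/[S̃,Δ̃]`.
Then there is a surjective group homomorphism `D̃ → E` carrying the class of `f_{i,j}` to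
the class of `fᵢ` and commuting with the projections onto `G`.
-/
theorem exists_smooth_cover_projection
    (hgen : Subgroup.closure (Set.range g) = ⊤) :
    ∃ ψ : TildeD g →* E g,
      Function.Surjective ψ ∧
      (∀ x : CloneIdx g,
        ψ (QuotientGroup.mk' ⁅(deltaProj g).ker, (⊤ : Subgroup (TildeDelta g))⁆
            (QuotientGroup.mk' (Subgroup.normalClosure {fstar g})
              (cyclicGen (fun x : CloneIdx g => orderOf (g x.1)) x))) =
          QuotientGroup.mk' ⁅(proj g).ker, (⊤ : Subgroup (F g))⁆
            (cyclicGen (fun i : Fin d => orderOf (g i)) x.1)) ∧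
      (coverProjE g).comp ψ = coverProjD g := by
  classical
  -- the map F̃ → E
  set h : TildeF g →* E g :=
    (QuotientGroup.mk' ⁅(proj g).ker, (⊤ : Subgroup (F g))⁆).comp (phi g) with hh
  -- descends to Δ̃
  have hfstar : h (fstar g) = 1 := by
    simp [hh, phi_fstar g]
  have hnc : Subgroup.normalClosure {fstar g} ≤ h.ker :=
    Subgroup.normalClosure_le_normal (by simpa using MonoidHom.mem_ker.mpr hfstar)
  set ψ₁ : TildeDelta g →* E g :=
    QuotientGroup.lift _ h (fun x hx => MonoidHom.mem_ker.mp (hnc hx)) with hψ₁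
  have hψ₁mk : ∀ t : TildeF g,
      ψ₁ (QuotientGroup.mk' (Subgroup.normalClosure {fstar g}) t) =
        QuotientGroup.mk' ⁅(proj g).ker, (⊤ : Subgroup (F g))⁆ (phi g t) := fun t => rfl
  -- kernel elements map to central elements
  open scoped commutatorElement in
  have hker : ∀ s : TildeDelta g, s ∈ (deltaProj g).ker →
      ∀ δ : TildeDelta g, ψ₁ ⁅s, δ⁆ = 1 := by
    intro s hs δ
    obtain ⟨t, rfl⟩ := QuotientGroup.mk'_surjective (Subgroup.normalClosure {fstar g}) s
    obtain ⟨u, rfl⟩ := QuotientGroup.mk'_surjective (Subgroup.normalClosure {fstar g}) δ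
    have ht : phi g t ∈ (proj g).ker := by
      rw [MonoidHom.mem_ker, proj_phi]
      exact hs
    rw [← map_commutatorElement, hψ₁mk, map_commutatorElement]
    exact (QuotientGroup.eq_one_iff _).mpr
      (Subgroup.commutator_mem_commutator ht (Subgroup.mem_top _))
  have hcomm : ⁅(deltaProj g).ker, (⊤ : Subgroup (TildeDelta g))⁆ ≤ ψ₁.ker :=
    Subgroup.commutator_le.mpr (fun s hs δ _ => MonoidHom.mem_ker.mpr (hker s hs δ))
  refine ⟨QuotientGroup.lift _ ψ₁ (fun x hx => MonoidHom.mem_ker.mp (hcomm hx)), ?_, ?_, ?_⟩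
  · intro e
    obtain ⟨f, rfl⟩ := QuotientGroup.mk'_surjective ⁅(proj g).ker, (⊤ : Subgroup (F g))⁆ e
    obtain ⟨t, rfl⟩ := phi_surjective g f
    exact ⟨QuotientGroup.mk' _ (QuotientGroup.mk' _ t), rfl⟩
  · intro x
    have key : ψ₁ (QuotientGroup.mk' (Subgroup.normalClosure {fstar g})
        (cyclicGen (fun x : CloneIdx g => orderOf (g x.1)) x)) =
        QuotientGroup.mk' ⁅(proj g).ker, (⊤ : Subgroup (F g))⁆
          (cyclicGen (fun i : Fin d => orderOf (g i)) x.1) := by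
      rw [hψ₁mk, phi_cyclicGen]
    exact key
  · refine MonoidHom.ext fun z => ?_
    obtain ⟨y, rfl⟩ := QuotientGroup.mk'_surjective _ z
    obtain ⟨t, rfl⟩ := QuotientGroup.mk'_surjective (Subgroup.normalClosure {fstar g}) y
    show coverProjE g (QuotientGroup.mk' _ (phi g t)) = _
    show proj g (phi g t) = tildeProj g t
    exact proj_phi g t


end SmoothCover
end

section
/- Let 1 → A → E →π→ G → 1 be a finite central extension of a finite group G, let σ : G → E be a section of π with associated cocycle γ (σ(g)σ(h) = σ(gh)γ(g,h)), and let η̇ : Hom(A,ℂˣ) → Z²(G,ℂˣ) be the homomorphism λ ↦ λ∘γ. Set S = η̇(Hom(A,ℂˣ)), a finite subgroup of Z²(G,ℂˣ). Then the subgroup ⟨σ(g) : g ∈ G⟩ of E is isomorphic to the Schur construction Š ∝ G; explicitly, the assignment σ(g)·∏_i γ(g_i,h_i) ↦ (g, ∏_i ω(g_i,h_i)) is a well-defined group isomorphism. -/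
/-- The 2-cocycle condition (for the trivial action) on a map `G → G → ℂˣ`. -/
def IsCocycle {G : Type*} [Group G] (α : G → G → ℂˣ) : Prop :=
  ∀ x y z : G, α x y * α (x * y) z = α x (y * z) * α y z

/-- The group `Z²(G,ℂˣ)` of 2-cocycles of `G` with values in `ℂˣ` (trivial action). -/
def Z2 (G : Type*) [Group G] : Subgroup (G → G → ℂˣ) where
  carrier := {α | IsCocycle α}
  one_mem' := by intro x y z; simp
  mul_mem' := by
    intro a b ha hb x y z
    simp only [Pi.mul_apply]
    rw [mul_mul_mul_comm, ha x y z, hb x y z, mul_mul_mul_comm]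
  inv_mem' := by
    intro a ha x y z
    simp only [Pi.inv_apply, ← mul_inv]
    rw [ha x y z]

section
variable {M : Type*} [CommGroup M]
private theorem helper1 (X Y a b c : M) : X * (Y * a * b) * c = (Y * X) * (a * b * c) := by
  simp [mul_comm, mul_left_comm, mul_assoc]
private theorem helper2 (X Z a b c : M) : (X * Z) * (a * b * c) = X * a * (Z * b * c) := by
  simp [mul_comm, mul_left_comm, mul_assoc]
private theorem helper3 (X Y z : M) : X * (X⁻¹ * Y⁻¹ * z⁻¹) * z = Y⁻¹ := by
  simp [mul_comm, mul_left_comm, mul_assoc]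
end

section Schur

variable {G : Type*} [Group G] (S : Subgroup (G → G → ℂˣ))

/-- The evaluation character `ω(g,h) : α ↦ α(g,h)` on a subgroup `S ≤ Z²(G,ℂˣ)`. -/
def omegaChar (g h : G) : S →* ℂˣ where
  toFun α := (α : G → G → ℂˣ) g h
  map_one' := rfl
  map_mul' _ _ := rfl

/-- The underlying type of the Schur construction `Š ∝ G`: pairs `(g, θ)` with `g ∈ G` and
`θ ∈ Š = Hom(S, ℂˣ)`, multiplied by the rule `(g,θ)(h,ψ) = (gh, ω(g,h)θψ)`. -/
def SchurC (hS : ∀ α ∈ S, IsCocycle α) : Type _ := G × (S →* ℂˣ)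

namespace SchurC

variable {S}

/-- Build an element of the Schur construction. -/
def mk (hS : ∀ α ∈ S, IsCocycle α) (g : G) (θ : S →* ℂˣ) : SchurC S hS := (g, θ)

variable {hS : ∀ α ∈ S, IsCocycle α}

/-- First (group) component of an element of the Schur construction. -/
def fst (x : SchurC S hS) : G := x.1

/-- Second (character) component of an element of the Schur construction. -/
def snd (x : SchurC S hS) : S →* ℂˣ := x.2

private theorem omega_cocycle (hS : ∀ α ∈ S, IsCocycle α) (x y z : G) :
    omegaChar S x y * omegaChar S (x * y) z = omegaChar S x (y * z) * omegaChar S y z := by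
  ext α
  exact congrArg Units.val (hS α α.2 x y z)

private theorem omega_one_left (hS : ∀ α ∈ S, IsCocycle α) (h : G) :
    omegaChar S 1 h = omegaChar S 1 1 := by
  ext α
  have := hS α α.2 1 1 h
  simp only [one_mul] at this
  exact congrArg Units.val (mul_right_cancel this.symm)

private theorem omega_one_right (hS : ∀ α ∈ S, IsCocycle α) (g : G) :
    omegaChar S g 1 = omegaChar S 1 1 := by
  ext α
  have := hS α α.2 g 1 1
  simp only [mul_one, one_mul] at this
  exact congrArg Units.val (mul_left_cancel this)

private theorem omega_inv (hS : ∀ α ∈ S, IsCocycle α) (g : G) :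
    omegaChar S g g⁻¹ = omegaChar S g⁻¹ g := by
  ext α
  have := hS α α.2 g g⁻¹ g
  simp only [mul_inv_cancel, inv_mul_cancel] at this
  have h1 : (α : G → G → ℂˣ) 1 g = (α : G → G → ℂˣ) 1 1 :=
    congrArg (fun f : S →* ℂˣ => f α) (omega_one_left hS g)
  have h2 : (α : G → G → ℂˣ) g 1 = (α : G → G → ℂˣ) 1 1 :=
    congrArg (fun f : S →* ℂˣ => f α) (omega_one_right hS g)
  rw [h1, h2] at this
  exact congrArg Units.val (mul_left_cancel ((mul_comm _ _).trans this))

instance : Mul (SchurC S hS) :=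
  ⟨fun x y => (x.1 * y.1, omegaChar S x.1 y.1 * x.2 * y.2)⟩

instance : One (SchurC S hS) := ⟨(1, (omegaChar S 1 1)⁻¹)⟩

instance : Inv (SchurC S hS) :=
  ⟨fun x => (x.1⁻¹, (omegaChar S x.1 x.1⁻¹)⁻¹ * (omegaChar S 1 1)⁻¹ * x.2⁻¹)⟩

instance instGroup : Group (SchurC S hS) :=
  Group.ofLeftAxioms
    (fun a b c => by
      refine Prod.ext (mul_assoc _ _ _) ?_
      show omegaChar S (a.1 * b.1) c.1 * (omegaChar S a.1 b.1 * a.2 * b.2) * c.2 =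
        omegaChar S a.1 (b.1 * c.1) * a.2 * (omegaChar S b.1 c.1 * b.2 * c.2)
      refine MonoidHom.ext fun α => ?_
      simp only [MonoidHom.mul_apply]
      have hα : omegaChar S a.1 b.1 α * omegaChar S (a.1 * b.1) c.1 α =
          omegaChar S a.1 (b.1 * c.1) α * omegaChar S b.1 c.1 α :=
        congrArg (fun f : S →* ℂˣ => f α) (omega_cocycle hS a.1 b.1 c.1)
      calc omegaChar S (a.1 * b.1) c.1 α * (omegaChar S a.1 b.1 α * a.2 α * b.2 α) * c.2 α
          = (omegaChar S a.1 b.1 α * omegaChar S (a.1 * b.1) c.1 α) * (a.2 α * b.2 α * c.2 α) :=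
            helper1 _ _ _ _ _
        _ = (omegaChar S a.1 (b.1 * c.1) α * omegaChar S b.1 c.1 α) * (a.2 α * b.2 α * c.2 α) := by
            rw [hα]
        _ = omegaChar S a.1 (b.1 * c.1) α * a.2 α * (omegaChar S b.1 c.1 α * b.2 α * c.2 α) :=
            helper2 _ _ _ _ _)
    (fun a => by
      refine Prod.ext (one_mul _) ?_
      show omegaChar S 1 a.1 * (omegaChar S 1 1)⁻¹ * a.2 = a.2
      rw [omega_one_left hS]
      refine MonoidHom.ext fun α => ?_
      simp only [MonoidHom.mul_apply, MonoidHom.inv_apply]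
      simp)
    (fun a => by
      refine Prod.ext (inv_mul_cancel _) ?_
      show omegaChar S a.1⁻¹ a.1 * ((omegaChar S a.1 a.1⁻¹)⁻¹ * (omegaChar S 1 1)⁻¹ * a.2⁻¹) * a.2
          = (omegaChar S 1 1)⁻¹
      rw [← omega_inv hS]
      refine MonoidHom.ext fun α => ?_
      simp only [MonoidHom.mul_apply, MonoidHom.inv_apply]
      exact helper3 _ _ _)

end SchurC

end Schur

section Standard

variable {G E : Type*} [Group G] [Group E]

/-- The homomorphism `η̇ : Hom(A,ℂˣ) → (G → G → ℂˣ)`, `λ ↦ λ∘γ`, associated to a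
cocycle `γ` of a central extension with kernel `A = ker π`. -/
def etaDot (π : E →* G) (γ : G → G → ↥π.ker) : ((↥π.ker) →* ℂˣ) →* (G → G → ℂˣ) where
  toFun lam := fun g h => lam (γ g h)
  map_one' := rfl
  map_mul' _ _ := rfl

/-- The cocycle identity for the cocycle `γ` of a central extension, defined by
`σ(g)σ(h) = σ(gh)γ(g,h)`. -/
theorem gamma_cocycle (π : E →* G) (hcentral : π.ker ≤ Subgroup.center E)
    (σ : G → E) (γ : G → G → ↥π.ker)
    (hγ : ∀ g h : G, σ g * σ h = σ (g * h) * (γ g h : E)) (x y z : G) :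
    γ x y * γ (x * y) z = γ x (y * z) * γ y z := by
  have comm : ∀ (a : ↥π.ker) (w : E), w * a = (a : E) * w := fun a w =>
    Subgroup.mem_center_iff.mp (hcentral a.2) w
  have e1 : σ x * σ y * σ z = σ (x * y * z) * ((γ x y : E) * (γ (x * y) z : E)) := by
    rw [hγ x y, mul_assoc, ← comm (γ x y) (σ z), ← mul_assoc, hγ (x * y) z,
      mul_assoc, comm (γ x y) ((γ (x * y) z : E))]
  have e2 : σ x * σ y * σ z = σ (x * y * z) * ((γ x (y * z) : E) * (γ y z : E)) := by
    rw [mul_assoc, hγ y z, ← mul_assoc, hγ x (y * z), mul_assoc, ← mul_assoc x y z]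
  have e3 : (γ x y : E) * (γ (x * y) z : E) = (γ x (y * z) : E) * (γ y z : E) :=
    mul_left_cancel (e1.symm.trans e2)
  exact Subtype.ext (by push_cast; exact e3)

/-- Each element of the range of `η̇` is a 2-cocycle. -/
theorem etaDot_range_isCocycle (π : E →* G) (hcentral : π.ker ≤ Subgroup.center E)
    (σ : G → E) (γ : G → G → ↥π.ker)
    (hγ : ∀ g h : G, σ g * σ h = σ (g * h) * (γ g h : E)) :
    ∀ α ∈ (etaDot π γ).range, IsCocycle α := by
  rintro α ⟨lam, rfl⟩ x y z
  show lam (γ x y) * lam (γ (x * y) z) = lam (γ x (y * z)) * lam (γ y z)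
  rw [← map_mul, ← map_mul, gamma_cocycle π hcentral σ γ hγ]

end Standard

section Aux

private theorem exists_char_ne {C : Type*} [CommGroup C] [Finite C] {a : C} (ha : a ≠ 1) :
    ∃ φ : C →* ℂˣ, φ a ≠ 1 := by
  have : NeZero ((Monoid.exponent C : ℂ)) :=
    ⟨Nat.cast_ne_zero.mpr Monoid.exponent_ne_zero_of_finite⟩
  exact CommGroup.exists_apply_ne_one_of_hasEnoughRootsOfUnity C ℂ ha

private theorem dual_equiv (C : Type*) [CommGroup C] [Finite C] :
    Nonempty ((C →* ℂˣ) ≃* C) := by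
  have : NeZero ((Monoid.exponent C : ℂ)) :=
    ⟨Nat.cast_ne_zero.mpr Monoid.exponent_ne_zero_of_finite⟩
  exact CommGroup.monoidHom_mulEquiv_of_hasEnoughRootsOfUnity C ℂ

/-- The map `e : Š →* E` sending `∏ ω(gᵢ,hᵢ)` to `∏ γ(gᵢ,hᵢ)`. -/
private theorem exists_e {G E : Type*} [Group G] [Group E] [Finite E]
    (π : E →* G) (hcentral : π.ker ≤ Subgroup.center E)
    (σ : G → E) (γ : G → G → ↥π.ker)
    (hγ : ∀ g h : G, σ g * σ h = σ (g * h) * (γ g h : E)) :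
    ∃ e : (↥(etaDot π γ).range →* ℂˣ) →* E,
      Function.Injective e ∧ (∀ θ, e θ ∈ π.ker) ∧
      (∀ g h : G, e (omegaChar (etaDot π γ).range g h) = (γ g h : E)) ∧
      (∀ θ, e θ ∈ Subgroup.closure (Set.range σ)) := by
  letI : CommGroup ↥π.ker :=
    { (inferInstance : Group ↥π.ker) with
      mul_comm := fun a b => Subtype.ext (Subgroup.mem_center_iff.mp (hcentral b.2) a) }
  set B : Subgroup ↥π.ker := Subgroup.closure (Set.range fun p : G × G => γ p.1 p.2) with hBdef
  let η₀ : (↥π.ker →* ℂˣ) →* ↥(etaDot π γ).range := (etaDot π γ).rangeRestrict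
  let res : (↥(etaDot π γ).range →* ℂˣ) →* ((↥π.ker →* ℂˣ) →* ℂˣ) :=
    { toFun := fun θ => θ.comp η₀
      map_one' := rfl
      map_mul' := fun _ _ => rfl }
  have hres_inj : Function.Injective res := by
    intro θ₁ θ₂ h
    refine MonoidHom.ext fun s => ?_
    obtain ⟨lam, rfl⟩ := (etaDot π γ).rangeRestrict_surjective s
    exact DFunLike.congr_fun h lam
  let ev : ↥π.ker →* ((↥π.ker →* ℂˣ) →* ℂˣ) :=
    { toFun := fun a =>
        { toFun := fun lam => lam a
          map_one' := rfl
          map_mul' := fun _ _ => rfl }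
      map_one' := by ext lam; exact congrArg Units.val (map_one lam)
      map_mul' := fun a b => by ext lam; exact congrArg Units.val (map_mul lam a b) }
  have hev_inj : Function.Injective ev := by
    rw [injective_iff_map_eq_one]
    intro a ha
    by_contra h
    obtain ⟨φ, hφ⟩ := exists_char_ne h
    exact hφ (DFunLike.congr_fun ha φ)
  obtain ⟨eA⟩ := dual_equiv ↥π.ker
  haveI : Finite (↥π.ker →* ℂˣ) := Finite.of_equiv _ eA.symm.toEquiv
  obtain ⟨eD⟩ := dual_equiv (↥π.ker →* ℂˣ)
  have hcard : Nat.card ↥π.ker = Nat.card ((↥π.ker →* ℂˣ) →* ℂˣ) := by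
    rw [Nat.card_eq_of_bijective _ eD.bijective, Nat.card_eq_of_bijective _ eA.bijective]
  haveI : Finite ((↥π.ker →* ℂˣ) →* ℂˣ) := Finite.of_equiv _ eD.symm.toEquiv
  have hev_bij : Function.Bijective ev :=
    (Nat.bijective_iff_injective_and_card ev).mpr ⟨hev_inj, hcard⟩
  let evE : ↥π.ker ≃* ((↥π.ker →* ℂˣ) →* ℂˣ) := MulEquiv.ofBijective ev hev_bij
  have key : ∀ θ : ↥(etaDot π γ).range →* ℂˣ, evE.symm (res θ) ∈ B := by
    intro θ
    by_contra hab
    have h1 : (QuotientGroup.mk (evE.symm (res θ)) : ↥π.ker ⧸ B) ≠ 1 := by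
      simpa [QuotientGroup.eq_one_iff] using hab
    obtain ⟨χ, hχ⟩ := exists_char_ne h1
    set lam : ↥π.ker →* ℂˣ := χ.comp (QuotientGroup.mk' B) with hlamdef
    have hlam : η₀ lam = 1 := by
      refine Subtype.ext ?_
      show etaDot π γ lam = 1
      funext g h
      show χ (QuotientGroup.mk' B (γ g h)) = 1
      have hmem : γ g h ∈ B := Subgroup.subset_closure ⟨(g, h), rfl⟩
      rw [show QuotientGroup.mk' B (γ g h) = 1 from (QuotientGroup.eq_one_iff _).mpr hmem,
        map_one]
    have h2 : res θ lam = 1 := by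
      show θ (η₀ lam) = 1
      rw [hlam, map_one]
    have h3 : res θ lam = χ (QuotientGroup.mk (evE.symm (res θ))) := by
      conv_lhs => rw [← evE.apply_symm_apply (res θ)]
      rfl
    exact hχ (h3.symm.trans h2)
  have homega : ∀ g h : G, evE.symm (res (omegaChar (etaDot π γ).range g h)) = γ g h := by
    intro g h
    rw [MulEquiv.symm_apply_eq]
    rfl
  refine ⟨(π.ker.subtype.comp evE.symm.toMonoidHom).comp res, ?_, ?_, ?_, ?_⟩
  · exact π.ker.subtype_injective.comp (evE.symm.injective.comp hres_inj)
  · intro θ; exact SetLike.coe_mem _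
  · intro g h
    show ((evE.symm (res (omegaChar (etaDot π γ).range g h)) : ↥π.ker) : E) = (γ g h : E)
    rw [homega]
  · intro θ
    show ((evE.symm (res θ) : ↥π.ker) : E) ∈ Subgroup.closure (Set.range σ)
    have hgen : ∀ b : ↥π.ker, b ∈ B → (b : E) ∈ Subgroup.closure (Set.range σ) := by
      intro b hb
      refine Subgroup.closure_induction ?_ ?_ ?_ ?_ hb
      · rintro x ⟨⟨g, h⟩, rfl⟩
        have hx : ((γ g h : ↥π.ker) : E) = (σ (g * h))⁻¹ * (σ g * σ h) := by
          rw [hγ g h]; group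
        rw [hx]
        exact mul_mem (inv_mem (Subgroup.subset_closure ⟨g * h, rfl⟩))
          (mul_mem (Subgroup.subset_closure ⟨g, rfl⟩) (Subgroup.subset_closure ⟨h, rfl⟩))
      · simpa using one_mem (Subgroup.closure (Set.range σ))
      · intro x y _ _ hx hy
        simpa using mul_mem hx hy
      · intro x _ hx
        simpa using inv_mem hx
    exact hgen _ (key θ)

end Aux

/-!
STATEMENT 18: Let `1 → A → E →π→ G → 1` be a finite central extension of a finite group
`G`, let `σ : G → E` be a section of `π` with associated cocycle `γ`
(`σ(g)σ(h) = σ(gh)γ(g,h)`, with values in `A = ker π`), and let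
`η̇ : Hom(A,ℂˣ) → Z²(G,ℂˣ)` be the homomorphism `λ ↦ λ∘γ`.  Set `S = η̇(Hom(A,ℂˣ))`, a
finite subgroup of `Z²(G,ℂˣ)`.  Then the subgroup `⟨σ(g) : g ∈ G⟩` of `E` is isomorphic
to the Schur construction `Š ∝ G`; explicitly, the assignment
`(g, ∏ᵢ ω(gᵢ,hᵢ)) ↦ σ(g)·∏ᵢ γ(gᵢ,hᵢ)` is a well-defined injective group homomorphism
with image `⟨σ(g) : g ∈ G⟩`.
-/
theorem schur_construction_of_central_extension
    {G E : Type*} [Group G] [Group E] [Finite G] [Finite E]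
    (π : E →* G) (hsurj : Function.Surjective π)
    (hcentral : π.ker ≤ Subgroup.center E)
    (σ : G → E) (hsec : ∀ g : G, π (σ g) = g)
    (γ : G → G → ↥π.ker)
    (hγ : ∀ g h : G, σ g * σ h = σ (g * h) * (γ g h : E)) :
    ∃ ψ : SchurC (etaDot π γ).range (etaDot_range_isCocycle π hcentral σ γ hγ) →* E,
      Function.Injective ψ ∧
      ψ.range = Subgroup.closure (Set.range σ) ∧
      ∀ (g : G) (l : List (G × G)),
        ψ (SchurC.mk (etaDot_range_isCocycle π hcentral σ γ hγ) g
            ((l.map (fun q : G × G => omegaChar (etaDot π γ).range q.1 q.2)).prod)) =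
          σ g * (l.map (fun q : G × G => (γ q.1 q.2 : E))).prod := by
  obtain ⟨e, einj, eker, eomega, eclos⟩ := exists_e π hcentral σ γ hγ
  have hσ1 : σ (1 : G) = (γ 1 1 : E) := by
    have h := hγ 1 1
    rw [one_mul] at h
    exact mul_left_cancel h
  have hcomm : ∀ (θ) (w : E), w * e θ = e θ * w := fun θ w =>
    Subgroup.mem_center_iff.mp (hcentral (eker θ)) w
  let hS := etaDot_range_isCocycle π hcentral σ γ hγ
  let ψ : SchurC (etaDot π γ).range hS →* E :=
    { toFun := fun x => σ x.1 * e x.2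
      map_one' := by
        show σ (1 : G) * e (omegaChar (etaDot π γ).range 1 1)⁻¹ = 1
        rw [map_inv e (omegaChar (etaDot π γ).range 1 1), eomega, hσ1, mul_inv_cancel]
      map_mul' := fun x y => by
        show σ (x.1 * y.1) * e (omegaChar (etaDot π γ).range x.1 y.1 * x.2 * y.2) =
          σ x.1 * e x.2 * (σ y.1 * e y.2)
        rw [map_mul, map_mul, eomega]
        simp only [← mul_assoc]
        rw [← hγ, mul_assoc (σ x.1) (σ y.1) (e x.2), hcomm x.2 (σ y.1), ← mul_assoc] }
  have hψ : ∀ x : SchurC (etaDot π γ).range hS, ψ x = σ x.1 * e x.2 := fun _ => rfl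
  refine ⟨ψ, ?_, ?_, ?_⟩
  · intro x y h
    rw [hψ, hψ] at h
    have h1 : x.1 = y.1 := by
      have h' := congrArg π h
      rw [map_mul, map_mul, hsec, hsec, MonoidHom.mem_ker.mp (eker x.2),
        MonoidHom.mem_ker.mp (eker y.2), mul_one, mul_one] at h'
      exact h'
    have h2 : x.2 = y.2 := by
      rw [h1] at h
      exact einj (mul_left_cancel h)
    exact Prod.ext h1 h2
  · refine le_antisymm ?_ ((Subgroup.closure_le _).mpr ?_)
    · rintro _ ⟨x, rfl⟩
      exact mul_mem (Subgroup.subset_closure ⟨x.1, rfl⟩) (eclos x.2)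
    · rintro _ ⟨g, rfl⟩
      refine ⟨((g, 1) : SchurC (etaDot π γ).range hS), ?_⟩
      refine (hψ _).trans ?_
      show σ g * e 1 = σ g
      rw [map_one, mul_one]
  · intro g l
    rw [hψ]
    show σ g * e ((l.map fun q : G × G => omegaChar (etaDot π γ).range q.1 q.2).prod) =
      σ g * (l.map fun q : G × G => (γ q.1 q.2 : E)).prod
    rw [map_list_prod e, List.map_map]
    congr 1
    refine congrArg List.prod (List.map_congr_left fun q _ => ?_)
    exact eomega q.1 q.2
end

section
/- Universality of the unitary cover: let G be a finite group and let Z_u(G) = {α ∈ Z²(G,ℂˣ) : ∏_{j=0}^{o(g)-1} α(g,g^j) = 1 for all g ∈ G} be the group of unitary cocycles. Then Z_u(G) is a finite subgroup of Z²(G,ℂˣ), and, writing Γ_uG = (Z_uG)ˇ ∝ G for the associated Schur construction, for every finite central extension 1 → A → Γ →p→ G → 1 admitting a section σ : G → Γ with o(σ(g)) = o(g) for all g ∈ G and with Γ = ⟨σ(g) : g ∈ G⟩, there exists a surjective group homomorphism φ : Γ_uG → Γ satisfying φ((g, 1)) = σ(g) for all g ∈ G (in particular p∘φ equals the canonical projection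 of Γ_uG onto G). -/
/-- The group `Z_u(G)` of unitary cocycles: 2-cocycles `α` satisfying additionally
`∏_{j=0}^{o(g)-1} α(g,g^j) = 1` for every `g ∈ G`. -/
def unitaryZ (G : Type*) [Group G] : Subgroup (G → G → ℂˣ) where
  carrier := {α | IsCocycle α ∧
    ∀ g : G, ∏ j ∈ Finset.range (orderOf g), α g (g ^ j) = 1}
  one_mem' := ⟨by intro x y z; simp, by intro g; simp⟩
  mul_mem' := by
    rintro a b ⟨ha1, ha2⟩ ⟨hb1, hb2⟩
    constructor
    · intro x y z
      simp only [Pi.mul_apply]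
      rw [mul_mul_mul_comm, ha1 x y z, hb1 x y z, mul_mul_mul_comm]
    · intro g
      simp only [Pi.mul_apply]
      rw [Finset.prod_mul_distrib, ha2 g, hb2 g, mul_one]
  inv_mem' := by
    rintro a ⟨ha1, ha2⟩
    constructor
    · intro x y z
      simp only [Pi.inv_apply, ← mul_inv]
      rw [ha1 x y z]
    · intro g
      simp only [Pi.inv_apply]
      rw [Finset.prod_inv_distrib, ha2 g, inv_one]

theorem unitaryZ_isCocycle (G : Type*) [Group G] :
    ∀ α ∈ unitaryZ G, IsCocycle α := fun _ h => h.1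


section DualAux

variable (K : Type*) [CommGroup K] [Finite K]

/-- Evaluation of a finite abelian group into its double dual (over `ℂˣ`). -/
def dualEval : K →* ((K →* ℂˣ) →* ℂˣ) where
  toFun a :=
    { toFun := fun χ => χ a
      map_one' := rfl
      map_mul' := fun _ _ => rfl }
  map_one' := by ext χ : 1; exact map_one χ
  map_mul' a b := by ext χ : 1; exact map_mul χ a b

lemma hasEnough : HasEnoughRootsOfUnity ℂ (Monoid.exponent K) := by
  haveI : NeZero ((Monoid.exponent K : ℂ)) :=
    ⟨Nat.cast_ne_zero.mpr Monoid.exponent_ne_zero_of_finite⟩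
  infer_instance

lemma card_dual : Nat.card (K →* ℂˣ) = Nat.card K := by
  haveI := hasEnough K
  exact Nat.card_congr (CommGroup.monoidHom_mulEquiv_of_hasEnoughRootsOfUnity K ℂ).some.toEquiv

lemma finite_dual : Finite (K →* ℂˣ) := by
  haveI := hasEnough K
  exact Finite.of_equiv K
    (CommGroup.monoidHom_mulEquiv_of_hasEnoughRootsOfUnity K ℂ).some.toEquiv.symm

lemma dualEval_bijective : Function.Bijective (dualEval K) := by
  haveI := hasEnough K
  haveI : Finite (K →* ℂˣ) := finite_dual K
  haveI : Finite ((K →* ℂˣ) →* ℂˣ) := finite_dual (K →* ℂˣ)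
  rw [Nat.bijective_iff_injective_and_card]
  constructor
  · rw [injective_iff_map_eq_one]
    intro a ha
    by_contra h
    obtain ⟨χ, hχ⟩ := CommGroup.exists_apply_ne_one_of_hasEnoughRootsOfUnity K ℂ h
    exact hχ (DFunLike.congr_fun ha χ)
  · rw [card_dual (K →* ℂˣ), card_dual K]

end DualAux

lemma unitaryZ_pow_eq_one {G : Type*} [Group G] [Fintype G] {α : G → G → ℂˣ}
    (hα : α ∈ unitaryZ G) (g h : G) :
    α g h ^ (Fintype.card G * Fintype.card G) = 1 := by
  obtain ⟨hcoc, hu⟩ := hα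
  set n := Fintype.card G with hn
  set f : G → ℂˣ := fun g => ∏ x : G, α g x with hf
  have hA : ∀ g h : G, α g h ^ n * f (g * h) = f g * f h := by
    intro g h
    have h1 : ∏ x : G, (α g h * α (g * h) x) = ∏ x : G, (α g (h * x) * α h x) :=
      Finset.prod_congr rfl (fun x _ => hcoc g h x)
    rw [Finset.prod_mul_distrib, Finset.prod_mul_distrib, Finset.prod_const,
      Finset.card_univ] at h1
    have h2 : ∏ x : G, α g (h * x) = f g := by
      simpa using Equiv.prod_comp (Equiv.mulLeft h) (fun x => α g x)
    rw [h2] at h1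
    exact h1
  have hford : ∀ g : G, f g ^ orderOf g = 1 := by
    intro g
    have h1 : ∏ j ∈ Finset.range (orderOf g), (α g (g ^ j)) ^ n = 1 := by
      rw [Finset.prod_pow, hu g, one_pow]
    have h2 : ∀ j : ℕ, (α g (g ^ j)) ^ n = f g * (f (g ^ j) / f (g ^ (j + 1))) := by
      intro j
      have := hA g (g ^ j)
      rw [← pow_succ' g j] at this
      rw [div_eq_mul_inv, ← mul_assoc, eq_mul_inv_iff_mul_eq]
      exact this
    have h4 : ∏ j ∈ Finset.range (orderOf g), (f (g ^ j) / f (g ^ (j + 1))) = 1 := by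
      have hi : ∀ j : ℕ, f (g ^ j) / f (g ^ (j + 1)) = (f (g ^ (j + 1)) / f (g ^ j))⁻¹ :=
        fun j => (inv_div _ _).symm
      rw [Finset.prod_congr rfl (fun j _ => hi j), Finset.prod_inv_distrib,
        Finset.prod_range_div (fun j => f (g ^ j)), pow_orderOf_eq_one, pow_zero, div_self',
        inv_one]
    rw [Finset.prod_congr rfl (fun j _ => h2 j), Finset.prod_mul_distrib, Finset.prod_const,
      Finset.card_range, h4, mul_one] at h1
    exact h1
  have hfn : ∀ x : G, f x ^ n = 1 := fun x =>
    orderOf_dvd_iff_pow_eq_one.mp ((orderOf_dvd_of_pow_eq_one (hford x)).trans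
      (orderOf_dvd_card))
  have h3 : α g h ^ n * f (g * h) = f g * f h := hA g h
  have h4 : α g h ^ (n * n) * (f (g * h)) ^ n = (f g) ^ n * (f h) ^ n := by
    rw [pow_mul, ← mul_pow, h3, mul_pow]
  rw [hfn, hfn, hfn, mul_one, mul_one] at h4
  exact h4

theorem unitaryZ_finite (G : Type*) [Group G] [Finite G] : Finite (unitaryZ G) := by
  haveI := Fintype.ofFinite G
  set m := Fintype.card G * Fintype.card G with hm
  let F : ↥(unitaryZ G) → (G → G → rootsOfUnity m ℂ) := fun α g h =>
    ⟨(α : G → G → ℂˣ) g h, (mem_rootsOfUnity m _).mpr (unitaryZ_pow_eq_one α.2 g h)⟩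
  have hinj : Function.Injective F := by
    intro a b hab
    refine Subtype.ext (funext fun g => funext fun h => ?_)
    exact Subtype.ext_iff.mp (congrFun (congrFun hab g) h)
  haveI : Finite ↥(rootsOfUnity m ℂ) := inferInstance
  exact Finite.of_injective F hinj

/-!
STATEMENT 19 (Universality of the unitary cover): let `G` be a finite group and let
`Z_u(G) = {α ∈ Z²(G,ℂˣ) : ∏_{j=0}^{o(g)-1} α(g,g^j) = 1 for all g ∈ G}` be the group of
unitary cocycles.  Then `Z_u(G)` is a finite subgroup of `Z²(G,ℂˣ)` and, writing
`Γ_u G = (Z_u G)ˇ ∝ G` for the associated Schur construction, for every finite central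
extension `1 → A → Γ →p→ G → 1` admitting a section `σ : G → Γ` with `o(σ(g)) = o(g)` for
all `g ∈ G` and with `Γ = ⟨σ(g) : g ∈ G⟩`, there exists a surjective group homomorphism
`φ : Γ_u G → Γ` satisfying `φ((g,1)) = σ(g)` for all `g ∈ G` (in particular `p ∘ φ`
equals the canonical projection of `Γ_u G` onto `G`).
-/
theorem unitary_cover_universal (G : Type*) [Group G] [Finite G] :
    Finite (unitaryZ G) ∧
    ∀ (Γ : Type*) [Group Γ] [Finite Γ] (p : Γ →* G),
      Function.Surjective p →
      p.ker ≤ Subgroup.center Γ →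
      ∀ σ : G → Γ, (∀ g : G, p (σ g) = g) →
        (∀ g : G, orderOf (σ g) = orderOf g) →
        Subgroup.closure (Set.range σ) = ⊤ →
        ∃ φ : SchurC (unitaryZ G) (unitaryZ_isCocycle G) →* Γ,
          Function.Surjective φ ∧
          (∀ g : G, φ (SchurC.mk (unitaryZ_isCocycle G) g 1) = σ g) ∧
          (∀ x : SchurC (unitaryZ G) (unitaryZ_isCocycle G),
            p (φ x) = SchurC.fst x) := by

  constructor
  · exact unitaryZ_finite G
  intro Γ _ _ p hps hc σ hσp hσo hσgen
  have hσ1 : σ 1 = 1 := by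
    have h := hσo 1
    rw [orderOf_one] at h
    exact orderOf_eq_one_iff.mp h
  haveI : IsMulCommutative ↥p.ker :=
    ⟨⟨fun a b => Subtype.ext ((Subgroup.mem_center_iff.mp (hc a.2) b.1).symm)⟩⟩
  open IsMulCommutative in letI : CommGroup ↥p.ker := inferInstance
  have hcent : ∀ (a : ↥p.ker) (x : Γ), x * (a : Γ) = (a : Γ) * x :=
    fun a x => Subgroup.mem_center_iff.mp (hc a.2) x
  have hker : ∀ g h : G, σ g * σ h * (σ (g * h))⁻¹ ∈ p.ker := by
    intro g h
    rw [MonoidHom.mem_ker]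
    simp only [map_mul, map_inv, hσp]
    group
  set β : G → G → ↥p.ker := fun g h => ⟨σ g * σ h * (σ (g * h))⁻¹, hker g h⟩ with hβdef
  have hβ : ∀ g h : G, σ g * σ h = (β g h : Γ) * σ (g * h) := by
    intro g h
    show σ g * σ h = σ g * σ h * (σ (g * h))⁻¹ * σ (g * h)
    rw [inv_mul_cancel_right]
  have hβcoc : ∀ x y z : G, β x y * β (x * y) z = β x (y * z) * β y z := by
    intro x y z
    have e1 : σ x * σ y * σ z = ((β x y * β (x * y) z : ↥p.ker) : Γ) * σ (x * y * z) :=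
      calc σ x * σ y * σ z = (↑(β x y) * σ (x * y)) * σ z := by rw [hβ x y]
        _ = ↑(β x y) * (σ (x * y) * σ z) := mul_assoc _ _ _
        _ = ↑(β x y) * (↑(β (x * y) z) * σ (x * y * z)) := by rw [hβ (x * y) z]
        _ = ((β x y * β (x * y) z : ↥p.ker) : Γ) * σ (x * y * z) := by
            rw [← mul_assoc, ← Subgroup.coe_mul]
    have e2 : σ x * σ y * σ z = ((β x (y * z) * β y z : ↥p.ker) : Γ) * σ (x * y * z) :=
      calc σ x * σ y * σ z = σ x * (σ y * σ z) := mul_assoc _ _ _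
        _ = σ x * (↑(β y z) * σ (y * z)) := by rw [hβ y z]
        _ = (σ x * ↑(β y z)) * σ (y * z) := (mul_assoc _ _ _).symm
        _ = (↑(β y z) * σ x) * σ (y * z) := by rw [hcent (β y z) (σ x)]
        _ = ↑(β y z) * (σ x * σ (y * z)) := mul_assoc _ _ _
        _ = ↑(β y z) * (↑(β x (y * z)) * σ (x * (y * z))) := by rw [hβ x (y * z)]
        _ = (↑(β y z) * ↑(β x (y * z))) * σ (x * y * z) := by
            rw [← mul_assoc, mul_assoc x y z]
        _ = ((β x (y * z) * β y z : ↥p.ker) : Γ) * σ (x * y * z) := by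
            rw [mul_comm (β x (y * z)) (β y z), Subgroup.coe_mul]
    exact Subtype.coe_injective (mul_right_cancel (e1.symm.trans e2))
  have hpow : ∀ (g : G) (m : ℕ),
      σ g ^ m = ((∏ j ∈ Finset.range m, β g (g ^ j) : ↥p.ker) : Γ) * σ (g ^ m) := by
    intro g m
    induction m with
    | zero => simp [hσ1]
    | succ m ih =>
      have h1 : σ g * σ (g ^ m) = ↑(β g (g ^ m)) * σ (g ^ (m + 1)) := by
        rw [hβ g (g ^ m), ← pow_succ' g m]
      calc σ g ^ (m + 1) = σ g * σ g ^ m := pow_succ' _ _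
        _ = σ g * (↑(∏ j ∈ Finset.range m, β g (g ^ j)) * σ (g ^ m)) := by rw [ih]
        _ = ↑(∏ j ∈ Finset.range (m + 1), β g (g ^ j)) * σ (g ^ (m + 1)) := by
            rw [Finset.prod_range_succ, Subgroup.coe_mul, ← mul_assoc,
              hcent (∏ j ∈ Finset.range m, β g (g ^ j)) (σ g), mul_assoc, h1, ← mul_assoc]
  have hβunit : ∀ g : G, ∏ j ∈ Finset.range (orderOf g), β g (g ^ j) = 1 := by
    intro g
    have h1 : σ g ^ orderOf g = 1 := by rw [← hσo g]; exact pow_orderOf_eq_one _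
    have h2 := hpow g (orderOf g)
    rw [h1, pow_orderOf_eq_one g, hσ1, mul_one] at h2
    exact Subtype.ext h2.symm
  have hBmem : ∀ χ : ↥p.ker →* ℂˣ, (fun g h => χ (β g h)) ∈ unitaryZ G := by
    intro χ
    constructor
    · intro x y z
      rw [← map_mul, ← map_mul, hβcoc x y z]
    · intro g
      rw [← map_prod χ (fun j => β g (g ^ j)) (Finset.range (orderOf g)), hβunit g, map_one]
  set B : (↥p.ker →* ℂˣ) →* ↥(unitaryZ G) :=
    { toFun := fun χ => ⟨fun g h => χ (β g h), hBmem χ⟩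
      map_one' := Subtype.ext rfl
      map_mul' := fun χ ψ => Subtype.ext rfl } with hBdef
  set Bd : (↥(unitaryZ G) →* ℂˣ) →* ((↥p.ker →* ℂˣ) →* ℂˣ) :=
    { toFun := fun θ => θ.comp B
      map_one' := by ext χ : 1; rfl
      map_mul' := fun θ θ' => by ext χ : 1; rfl } with hBddef
  have hKbij := dualEval_bijective ↥p.ker
  set E := MulEquiv.ofBijective (dualEval ↥p.ker) hKbij with hEdef
  set fθ : (↥(unitaryZ G) →* ℂˣ) →* ↥p.ker := (E.symm.toMonoidHom).comp Bd with hfθdef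
  have hfθ : ∀ (θ : ↥(unitaryZ G) →* ℂˣ) (χ : ↥p.ker →* ℂˣ), χ (fθ θ) = θ (B χ) := by
    intro θ χ
    have h : dualEval ↥p.ker (fθ θ) = Bd θ := by
      show dualEval ↥p.ker (E.symm (Bd θ)) = Bd θ
      exact E.apply_symm_apply (Bd θ)
    exact DFunLike.congr_fun h χ
  have hfω : ∀ g h : G, fθ (omegaChar (unitaryZ G) g h) = β g h := by
    intro g h
    refine hKbij.1 ?_
    ext χ : 1
    show χ (fθ (omegaChar (unitaryZ G) g h)) = χ (β g h)
    rw [hfθ]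
    rfl
  have hβ11 : β 1 1 = 1 := Subtype.ext (by show σ 1 * σ 1 * (σ (1 * 1))⁻¹ = 1; simp [hσ1])
  refine ⟨{ toFun := fun x => ((fθ x.2 : ↥p.ker) : Γ) * σ x.1
            map_one' := ?_
            map_mul' := ?_ }, ?_, ?_, ?_⟩
  · show ((fθ ((omegaChar (unitaryZ G) 1 1)⁻¹) : ↥p.ker) : Γ) * σ (1 : G) = 1
    have h0 : fθ ((omegaChar (unitaryZ G) 1 1)⁻¹) = 1 := by
      rw [map_inv fθ (omegaChar (unitaryZ G) 1 1), hfω, hβ11, inv_one]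
    rw [h0, hσ1]
    simp
  · intro x y
    show ((fθ (omegaChar (unitaryZ G) x.1 y.1 * x.2 * y.2) : ↥p.ker) : Γ) * σ (x.1 * y.1)
        = (((fθ x.2 : ↥p.ker) : Γ) * σ x.1) * (((fθ y.2 : ↥p.ker) : Γ) * σ y.1)
    rw [map_mul, map_mul, hfω, Subgroup.coe_mul, Subgroup.coe_mul]
    have h1 : σ x.1 * (((fθ y.2 : ↥p.ker) : Γ) * σ y.1)
        = ((fθ y.2 : ↥p.ker) : Γ) * (σ x.1 * σ y.1) := by
      rw [← mul_assoc, hcent (fθ y.2) (σ x.1), mul_assoc]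
    rw [mul_assoc (((fθ x.2 : ↥p.ker) : Γ)), h1, hβ x.1 y.1]
    calc ((β x.1 y.1 : Γ) * (fθ x.2 : ↥p.ker) * (fθ y.2 : ↥p.ker)) * σ (x.1 * y.1)
        = ((fθ x.2 : ↥p.ker) : Γ) * (β x.1 y.1 : Γ) * (fθ y.2 : ↥p.ker) * σ (x.1 * y.1) := by
          rw [hcent (fθ x.2) (β x.1 y.1 : Γ)]
      _ = ((fθ x.2 : ↥p.ker) : Γ) * ((fθ y.2 : ↥p.ker) * (β x.1 y.1 : Γ)) * σ (x.1 * y.1) := by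
          rw [mul_assoc (((fθ x.2 : ↥p.ker) : Γ)), hcent (fθ y.2) (β x.1 y.1 : Γ)]
      _ = ((fθ x.2 : ↥p.ker) : Γ) * ((fθ y.2 : ↥p.ker) * ((β x.1 y.1 : Γ) * σ (x.1 * y.1))) := by
          rw [mul_assoc, mul_assoc]
  · rw [← MonoidHom.range_eq_top, eq_top_iff, ← hσgen, Subgroup.closure_le]
    rintro x ⟨g, rfl⟩
    refine ⟨SchurC.mk (unitaryZ_isCocycle G) g 1, ?_⟩
    show ((fθ 1 : ↥p.ker) : Γ) * σ g = σ g
    rw [map_one]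
    simp
  · intro g
    show ((fθ 1 : ↥p.ker) : Γ) * σ g = σ g
    rw [map_one]
    simp
  · intro x
    show p (((fθ x.2 : ↥p.ker) : Γ) * σ x.1) = x.1
    rw [map_mul, hσp, MonoidHom.mem_ker.mp (fθ x.2).2, one_mul]
end
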